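/- arXiv:2409.04897 — 4 statements merged into one kernel-verified Lean document; each statement's English description precedes it below -/
import Mathlib

section
/- Let two instances of the selection setting have the same n distinct observed utilities and the same capacities k_1,…,k_p, and preference profiles σ and σ' that agree on every candidate except possibly one candidate i*. Let M and M' be the unique stable assignments of the two instances. Then the number of candidates i with M(i) ≠ M'(i) is at most p + 1; moreover, for every institution ℓ, at most one candidate other than i* is assigned to ℓ by M but not by M', and at most one candidate other than i* is assigned to ℓ by M' but not by M. -/
open MeasureTheory Finset

/-- The set of candidates assigned to institution `ℓ` by the (partial) assignment `M`. -/
def assignedTo {n p : ℕ} (M : Fin n → Option (Fin p)) (ℓ : Fin p) : Finset (Fin n) :=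
  Finset.univ.filter fun i => M i = some ℓ

/-- `M` is an assignment respecting the capacities `k`. -/
def IsAssignment {n p : ℕ} (k : Fin p → ℕ) (M : Fin n → Option (Fin p)) : Prop :=
  ∀ ℓ : Fin p, (assignedTo M ℓ).card ≤ k ℓ

/-- Candidate with preference order `σi` (a ranking of the institutions, smaller rank = more
preferred) strictly prefers institution `j` to the current assignment `cur`; an unassigned
candidate strictly prefers every institution to being unassigned. -/
def Prefers {p : ℕ} (σi : Equiv.Perm (Fin p)) (j : Fin p) : Option (Fin p) → Prop
  | none => True
  | some j' => σi j < σi j'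

/-- The candidate–institution pair `(i, j)` blocks the assignment `M`. -/
def Blocks {n p : ℕ} (uhat : Fin n → ℝ) (σ : Fin n → Equiv.Perm (Fin p))
    (k : Fin p → ℕ) (M : Fin n → Option (Fin p)) (i : Fin n) (j : Fin p) : Prop :=
  M i ≠ some j ∧ Prefers (σ i) j (M i) ∧
    ((assignedTo M j).card < k j ∨ ∃ i' ∈ assignedTo M j, uhat i' < uhat i)

/-- `M` is a stable assignment: it respects capacities and no pair blocks it. -/
def IsStable {n p : ℕ} (uhat : Fin n → ℝ) (σ : Fin n → Equiv.Perm (Fin p))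
    (k : Fin p → ℕ) (M : Fin n → Option (Fin p)) : Prop :=
  IsAssignment k M ∧ ∀ i j, ¬ Blocks uhat σ k M i j

namespace SLIP

variable {n p : ℕ}

/-- Number of candidates of strictly larger utility than `i` assigned to `ℓ`. -/
noncomputable def cAb (uhat : Fin n → ℝ) (M : Fin n → Option (Fin p)) (i : Fin n) (ℓ : Fin p) : ℕ :=
  (Finset.univ.filter fun i' => uhat i < uhat i' ∧ M i' = some ℓ).card

lemma stable_some {uhat : Fin n → ℝ} (huhat : Function.Injective uhat)
    {σ : Fin n → Equiv.Perm (Fin p)} {k : Fin p → ℕ} {M : Fin n → Option (Fin p)}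
    (hM : IsStable uhat σ k M) {i : Fin n} {j : Fin p} (hij : M i = some j) :
    cAb uhat M i j < k j ∧ ∀ ℓ, cAb uhat M i ℓ < k ℓ → σ i j ≤ σ i ℓ := by
  constructor
  · have hsub : (Finset.univ.filter fun i' => uhat i < uhat i' ∧ M i' = some j)
        ⊆ (assignedTo M j).erase i := by
      intro x hx
      simp only [mem_filter, mem_univ, true_and] at hx
      refine Finset.mem_erase.2 ⟨?_, ?_⟩
      · rintro rfl; exact lt_irrefl _ hx.1
      · simp [assignedTo, hx.2]
    have h1 : i ∈ assignedTo M j := by simp [assignedTo, hij]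
    have h2 := Finset.card_erase_of_mem h1
    have h3 := hM.1 j
    have h4 : 0 < (assignedTo M j).card := Finset.card_pos.2 ⟨i, h1⟩
    have h5 := Finset.card_le_card hsub
    unfold cAb
    omega
  · intro ℓ hℓ
    by_contra hlt
    push_neg at hlt
    have hjℓ : j ≠ ℓ := by rintro rfl; exact lt_irrefl _ hlt
    refine hM.2 i ℓ ⟨?_, ?_, ?_⟩
    · rw [hij]; intro hc
      exact hjℓ (Option.some.inj hc)
    · rw [hij]; exact hlt
    · rcases lt_or_ge (assignedTo M ℓ).card (k ℓ) with h | h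
      · exact Or.inl h
      · right
        by_contra hno
        push_neg at hno
        have hsub : assignedTo M ℓ ⊆
            (Finset.univ.filter fun i' => uhat i < uhat i' ∧ M i' = some ℓ) := by
          intro x hx
          have hxl : M x = some ℓ := by
            simpa [assignedTo] using hx
          have hxi : x ≠ i := by
            rintro rfl; rw [hij] at hxl; exact hjℓ (Option.some.inj hxl)
          have hle : uhat i ≤ uhat x := hno x hx
          have hne : uhat i ≠ uhat x := fun he => hxi (huhat he.symm)
          simp only [mem_filter, mem_univ, true_and]
          exact ⟨lt_of_le_of_ne hle hne, hxl⟩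
        have := Finset.card_le_card hsub
        unfold cAb at hℓ
        omega

lemma stable_none {uhat : Fin n → ℝ} (huhat : Function.Injective uhat)
    {σ : Fin n → Equiv.Perm (Fin p)} {k : Fin p → ℕ} {M : Fin n → Option (Fin p)}
    (hM : IsStable uhat σ k M) {i : Fin n} (hi : M i = none) :
    ∀ ℓ, k ℓ ≤ cAb uhat M i ℓ := by
  intro ℓ
  by_contra hℓ
  push_neg at hℓ
  refine hM.2 i ℓ ⟨?_, ?_, ?_⟩
  · rw [hi]; simp
  · rw [hi]; trivial
  · rcases lt_or_ge (assignedTo M ℓ).card (k ℓ) with h | h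
    · exact Or.inl h
    · right
      by_contra hno
      push_neg at hno
      have hsub : assignedTo M ℓ ⊆
          (Finset.univ.filter fun i' => uhat i < uhat i' ∧ M i' = some ℓ) := by
        intro x hx
        have hxl : M x = some ℓ := by simpa [assignedTo] using hx
        have hxi : x ≠ i := by rintro rfl; rw [hi] at hxl; cases hxl
        have hle : uhat i ≤ uhat x := hno x hx
        have : uhat i ≠ uhat x := fun he => hxi (huhat he.symm)
        simp only [mem_filter, mem_univ, true_and]
        exact ⟨lt_of_le_of_ne hle this, hxl⟩
      have := Finset.card_le_card hsub
      unfold cAb at hℓ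
      omega

lemma choice_eq {uhat : Fin n → ℝ} (huhat : Function.Injective uhat)
    {σ σ' : Fin n → Equiv.Perm (Fin p)} {k : Fin p → ℕ} {M M' : Fin n → Option (Fin p)}
    (hM : IsStable uhat σ k M) (hM' : IsStable uhat σ' k M') {i : Fin n}
    (hσ : σ i = σ' i) (hc : ∀ ℓ, cAb uhat M i ℓ = cAb uhat M' i ℓ) : M i = M' i := by
  cases hA : M i with
  | none =>
    cases hB : M' i with
    | none => rfl
    | some j' =>
      have h1 := stable_none huhat hM hA j'
      have h2 := (stable_some huhat hM' hB).1
      rw [hc j'] at h1; omega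
  | some j =>
    cases hB : M' i with
    | none =>
      have h1 := stable_none huhat hM' hB j
      have h2 := (stable_some huhat hM hA).1
      rw [hc j] at h2; omega
    | some j' =>
      have h1 := stable_some huhat hM hA
      have h2 := stable_some huhat hM' hB
      have h3 : σ i j ≤ σ i j' := h1.2 j' (by rw [hc j']; exact h2.1)
      have h4 : σ' i j' ≤ σ' i j := h2.2 j (by rw [← hc j]; exact h1.1)
      rw [← hσ] at h4
      have : σ i j = σ i j' := le_antisymm h3 h4
      rw [(σ i).injective this]

lemma cAb_step {uhat : Fin n → ℝ} (huhat : Function.Injective uhat)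
    {i i₁ : Fin n} (h₁ : uhat i < uhat i₁)
    (hmin : ∀ x, uhat i < uhat x → uhat i₁ ≤ uhat x)
    (M : Fin n → Option (Fin p)) (ℓ : Fin p) :
    cAb uhat M i ℓ = cAb uhat M i₁ ℓ + (if M i₁ = some ℓ then 1 else 0) := by
  classical
  have hiff : ∀ x, (uhat i < uhat x ∧ M x = some ℓ) ↔
      ((x = i₁ ∧ M i₁ = some ℓ) ∨ (uhat i₁ < uhat x ∧ M x = some ℓ)) := by
    intro x
    constructor
    · rintro ⟨hx1, hx2⟩
      by_cases hx : x = i₁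
      · subst hx; exact Or.inl ⟨rfl, hx2⟩
      · exact Or.inr ⟨lt_of_le_of_ne (hmin x hx1) (fun he => hx (huhat he.symm)), hx2⟩
    · rintro (⟨rfl, hx2⟩ | ⟨hx1, hx2⟩)
      · exact ⟨h₁, hx2⟩
      · exact ⟨lt_trans h₁ hx1, hx2⟩
  unfold cAb
  split_ifs with h
  · have : (Finset.univ.filter fun i' => uhat i < uhat i' ∧ M i' = some ℓ)
        = insert i₁ (Finset.univ.filter fun i' => uhat i₁ < uhat i' ∧ M i' = some ℓ) := by
      ext x
      simp only [mem_filter, mem_univ, true_and, mem_insert]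
      rw [hiff x]
      constructor
      · rintro (⟨rfl, _⟩ | hx); · exact Or.inl rfl
        · exact Or.inr hx
      · rintro (rfl | hx); · exact Or.inl ⟨rfl, h⟩
        · exact Or.inr hx
    rw [this, Finset.card_insert_of_notMem (by simp)]
  · have : (Finset.univ.filter fun i' => uhat i < uhat i' ∧ M i' = some ℓ)
        = (Finset.univ.filter fun i' => uhat i₁ < uhat i' ∧ M i' = some ℓ) := by
      ext x
      simp only [mem_filter, mem_univ, true_and]
      rw [hiff x]
      constructor
      · rintro (⟨rfl, hx2⟩ | hx); · exact absurd hx2 h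
        · exact hx
      · exact fun hx => Or.inr hx
    rw [this]; omega

lemma cAb_mono {uhat : Fin n → ℝ} (huhat : Function.Injective uhat)
    {i i₁ : Fin n} (h₁ : uhat i < uhat i₁)
    (hmin : ∀ x, uhat i < uhat x → uhat i₁ ≤ uhat x)
    (M : Fin n → Option (Fin p)) (ℓ : Fin p) :
    cAb uhat M i₁ ℓ ≤ cAb uhat M i ℓ := by
  rw [cAb_step huhat h₁ hmin M ℓ]; omega

/-- A one-sided divergence at `ℓ` strictly above `i`. -/
def Hdv (uhat : Fin n → ℝ) (M M' : Fin n → Option (Fin p)) (istar i : Fin n) (ℓ : Fin p) : Prop :=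
  ∃ i₀, i₀ ≠ istar ∧ uhat i < uhat i₀ ∧ M i₀ = some ℓ ∧ M' i₀ ≠ some ℓ

/-- A "consumption" event at `ℓ` strictly above `i`. -/
def Hcons (uhat : Fin n → ℝ) (σ : Fin n → Equiv.Perm (Fin p))
    (M M' : Fin n → Option (Fin p)) (istar i : Fin n) (ℓ : Fin p) : Prop :=
  ∃ i₀, i₀ ≠ istar ∧ uhat i < uhat i₀ ∧
    ((M i₀ = some ℓ ∧ Prefers (σ i₀) ℓ (M' i₀)) ∨ (M' i₀ = some ℓ ∧ Prefers (σ i₀) ℓ (M i₀)))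

def indO (a : Option (Fin p)) (ℓ : Fin p) : ℤ := if a = some ℓ then 1 else 0

def Jinv (uhat : Fin n → ℝ) (σ : Fin n → Equiv.Perm (Fin p)) (k : Fin p → ℕ)
    (M M' : Fin n → Option (Fin p)) (istar i : Fin n) : Prop :=
  ∃ a b : Option (Fin p),
    (∀ x : Fin p, ¬(a = some x ∧ b = some x)) ∧
    (∀ ℓ, (cAb uhat M i ℓ : ℤ) - (cAb uhat M' i ℓ : ℤ) = indO a ℓ - indO b ℓ) ∧
    (uhat istar ≤ uhat i → a = none ∧ b = none ∧
        ∀ ℓ, ¬ Hdv uhat M M' istar i ℓ ∧ ¬ Hdv uhat M' M istar i ℓ) ∧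
    (∀ ℓ, Hdv uhat M M' istar i ℓ →
        a = some ℓ ∨ k ℓ ≤ cAb uhat M i ℓ ∨ (a = none ∧ b = none)) ∧
    (∀ ℓ, Hdv uhat M' M istar i ℓ →
        b = some ℓ ∨ k ℓ ≤ cAb uhat M' i ℓ ∨ (a = none ∧ b = none)) ∧
    (∀ ℓ, Hcons uhat σ M M' istar i ℓ →
        (k ℓ ≤ cAb uhat M i ℓ ∧ k ℓ ≤ cAb uhat M' i ℓ) ∨ (a = none ∧ b = none))

lemma hdv_dec {uhat : Fin n → ℝ} (huhat : Function.Injective uhat)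
    {M M' : Fin n → Option (Fin p)} {istar i i₁ : Fin n} (h₁ : uhat i < uhat i₁)
    (hmin : ∀ x, uhat i < uhat x → uhat i₁ ≤ uhat x) {ℓ : Fin p}
    (h : Hdv uhat M M' istar i ℓ) :
    Hdv uhat M M' istar i₁ ℓ ∨ (i₁ ≠ istar ∧ M i₁ = some ℓ ∧ M' i₁ ≠ some ℓ) := by
  obtain ⟨i₀, h0, hlt, hM0, hM'0⟩ := h
  by_cases hne : i₀ = i₁
  · subst hne; exact Or.inr ⟨h0, hM0, hM'0⟩
  · exact Or.inl ⟨i₀, h0, lt_of_le_of_ne (hmin i₀ hlt) (fun he => hne (huhat he).symm), hM0, hM'0⟩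

lemma hcons_dec {uhat : Fin n → ℝ} (huhat : Function.Injective uhat)
    {σ : Fin n → Equiv.Perm (Fin p)}
    {M M' : Fin n → Option (Fin p)} {istar i i₁ : Fin n} (h₁ : uhat i < uhat i₁)
    (hmin : ∀ x, uhat i < uhat x → uhat i₁ ≤ uhat x) {ℓ : Fin p}
    (h : Hcons uhat σ M M' istar i ℓ) :
    Hcons uhat σ M M' istar i₁ ℓ ∨ (i₁ ≠ istar ∧
      ((M i₁ = some ℓ ∧ Prefers (σ i₁) ℓ (M' i₁)) ∨ (M' i₁ = some ℓ ∧ Prefers (σ i₁) ℓ (M i₁)))) := by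
  obtain ⟨i₀, h0, hlt, hor⟩ := h
  by_cases hne : i₀ = i₁
  · subst hne; exact Or.inr ⟨h0, hor⟩
  · exact Or.inl ⟨i₀, h0, lt_of_le_of_ne (hmin i₀ hlt) (fun he => hne (huhat he).symm), hor⟩

lemma hcons_imp {uhat : Fin n → ℝ} {σ : Fin n → Equiv.Perm (Fin p)}
    {M M' : Fin n → Option (Fin p)} {istar i : Fin n} {ℓ : Fin p}
    (h : Hcons uhat σ M M' istar i ℓ) :
    Hdv uhat M M' istar i ℓ ∨ Hdv uhat M' M istar i ℓ := by
  obtain ⟨i₀, h0, hlt, (⟨hm0, hp⟩ | ⟨hm0, hp⟩)⟩ := h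
  · refine Or.inl ⟨i₀, h0, hlt, hm0, fun hcc => ?_⟩
    rw [hcc] at hp; exact lt_irrefl _ hp
  · refine Or.inr ⟨i₀, h0, hlt, hm0, fun hcc => ?_⟩
    rw [hcc] at hp; exact lt_irrefl _ hp

lemma hcons_swap {uhat : Fin n → ℝ} {σ σ' : Fin n → Equiv.Perm (Fin p)}
    {M M' : Fin n → Option (Fin p)} {istar i : Fin n} {ℓ : Fin p}
    (hagree : ∀ i, i ≠ istar → σ i = σ' i)
    (h : Hcons uhat σ' M' M istar i ℓ) : Hcons uhat σ M M' istar i ℓ := by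
  obtain ⟨i₀, h0, hlt, hor⟩ := h
  refine ⟨i₀, h0, hlt, ?_⟩
  rw [← hagree i₀ h0] at hor
  exact hor.symm

lemma jinv_swap {uhat : Fin n → ℝ} {σ σ' : Fin n → Equiv.Perm (Fin p)} {k : Fin p → ℕ}
    {M M' : Fin n → Option (Fin p)} {istar i : Fin n}
    (hagree : ∀ i, i ≠ istar → σ i = σ' i)
    (h : Jinv uhat σ k M M' istar i) : Jinv uhat σ' k M' M istar i := by
  obtain ⟨a, b, hok, hsh, hz, hm, hm', hc⟩ := h
  refine ⟨b, a, fun x hx => hok x ⟨hx.2, hx.1⟩, fun ℓ => by have := hsh ℓ; omega, ?_, ?_, ?_, ?_⟩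
  · intro h
    obtain ⟨ha, hb, hH⟩ := hz h
    exact ⟨hb, ha, fun ℓ => ⟨(hH ℓ).2, (hH ℓ).1⟩⟩
  · intro ℓ hH
    rcases hm' ℓ hH with h | h | h
    · exact Or.inl h
    · exact Or.inr (Or.inl h)
    · exact Or.inr (Or.inr ⟨h.2, h.1⟩)
  · intro ℓ hH
    rcases hm ℓ hH with h | h | h
    · exact Or.inl h
    · exact Or.inr (Or.inl h)
    · exact Or.inr (Or.inr ⟨h.2, h.1⟩)
  · intro ℓ hH
    rcases hc ℓ (hcons_swap hagree hH) with h | h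
    · exact Or.inl ⟨h.2, h.1⟩
    · exact Or.inr ⟨h.2, h.1⟩

lemma jinv_base {uhat : Fin n → ℝ} {σ : Fin n → Equiv.Perm (Fin p)} {k : Fin p → ℕ}
    {M M' : Fin n → Option (Fin p)} {istar i : Fin n}
    (h : ∀ x, ¬ uhat i < uhat x) : Jinv uhat σ k M M' istar i := by
  have hc : ∀ (N : Fin n → Option (Fin p)) ℓ, cAb uhat N i ℓ = 0 := by
    intro N ℓ
    unfold cAb
    rw [Finset.card_eq_zero, Finset.filter_eq_empty_iff]
    intro x _
    exact fun hx => h x hx.1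
  refine ⟨none, none, by simp, fun ℓ => by simp [hc, indO], ?_, ?_, ?_, ?_⟩
  · exact fun _ => ⟨rfl, rfl, fun ℓ => ⟨fun ⟨i₀, _, hlt, _⟩ => h i₀ hlt, fun ⟨i₀, _, hlt, _⟩ => h i₀ hlt⟩⟩
  · rintro ℓ ⟨i₀, _, hlt, _⟩; exact absurd hlt (h i₀)
  · rintro ℓ ⟨i₀, _, hlt, _⟩; exact absurd hlt (h i₀)
  · rintro ℓ ⟨i₀, _, hlt, _⟩; exact absurd hlt (h i₀)

lemma jinv_stepEq {uhat : Fin n → ℝ} (huhat : Function.Injective uhat)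
    {σ : Fin n → Equiv.Perm (Fin p)} {k : Fin p → ℕ}
    {M M' : Fin n → Option (Fin p)} {istar : Fin n}
    {i i₁ : Fin n} (h₁ : uhat i < uhat i₁)
    (hmin : ∀ x, uhat i < uhat x → uhat i₁ ≤ uhat x)
    (heq : M i₁ = M' i₁)
    (hJ : Jinv uhat σ k M M' istar i₁) : Jinv uhat σ k M M' istar i := by
  obtain ⟨a, b, hok, hsh, hz, hm, hm', hc⟩ := hJ
  refine ⟨a, b, hok, ?_, ?_, ?_, ?_, ?_⟩
  · intro ℓ
    have hq := hsh ℓ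
    rw [cAb_step huhat h₁ hmin M ℓ, cAb_step huhat h₁ hmin M' ℓ, heq]
    split_ifs <;> push_cast <;> omega
  · intro h
    have h' : uhat istar ≤ uhat i₁ := le_trans h h₁.le
    obtain ⟨ha, hb, hH⟩ := hz h'
    refine ⟨ha, hb, fun ℓ => ⟨?_, ?_⟩⟩
    · intro hdv
      rcases hdv_dec huhat h₁ hmin hdv with hold | ⟨_, hMℓ, hM'ℓ⟩
      · exact (hH ℓ).1 hold
      · rw [heq] at hMℓ; exact hM'ℓ hMℓ
    · intro hdv
      rcases hdv_dec huhat h₁ hmin hdv with hold | ⟨_, hM'ℓ, hMℓ⟩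
      · exact (hH ℓ).2 hold
      · rw [← heq] at hM'ℓ; exact hMℓ hM'ℓ
  · intro ℓ hH
    rcases hdv_dec huhat h₁ hmin hH with hold | ⟨_, hMℓ, hM'ℓ⟩
    · rcases hm ℓ hold with h | h | h
      · exact Or.inl h
      · exact Or.inr (Or.inl (le_trans h (cAb_mono huhat h₁ hmin M ℓ)))
      · exact Or.inr (Or.inr h)
    · rw [heq] at hMℓ; exact absurd hMℓ hM'ℓ
  · intro ℓ hH
    rcases hdv_dec huhat h₁ hmin hH with hold | ⟨_, hM'ℓ, hMℓ⟩
    · rcases hm' ℓ hold with h | h | h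
      · exact Or.inl h
      · exact Or.inr (Or.inl (le_trans h (cAb_mono huhat h₁ hmin M' ℓ)))
      · exact Or.inr (Or.inr h)
    · rw [← heq] at hM'ℓ; exact absurd hM'ℓ hMℓ
  · intro ℓ hH
    rcases hcons_dec huhat h₁ hmin hH with hold | ⟨_, hpat⟩
    · rcases hc ℓ hold with h | h
      · exact Or.inl ⟨le_trans h.1 (cAb_mono huhat h₁ hmin M ℓ),
          le_trans h.2 (cAb_mono huhat h₁ hmin M' ℓ)⟩
      · exact Or.inr h
    · exfalso
      rcases hpat with ⟨hMℓ, hp⟩ | ⟨hM'ℓ, hp⟩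
      · rw [← heq, hMℓ] at hp; simp [Prefers] at hp
      · rw [heq, hM'ℓ] at hp; simp [Prefers] at hp

lemma jinv_stepStar {uhat : Fin n → ℝ} (huhat : Function.Injective uhat)
    {σ : Fin n → Equiv.Perm (Fin p)} {k : Fin p → ℕ}
    {M M' : Fin n → Option (Fin p)} {istar : Fin n}
    {i : Fin n} (h₁ : uhat i < uhat istar)
    (hmin : ∀ x, uhat i < uhat x → uhat istar ≤ uhat x)
    (hne : M istar ≠ M' istar)
    (hJ : Jinv uhat σ k M M' istar istar) : Jinv uhat σ k M M' istar i := by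
  obtain ⟨a, b, hok, hsh, hz, hm, hm', hc⟩ := hJ
  obtain ⟨ha, hb, hH⟩ := hz le_rfl
  have hq0 : ∀ ℓ, (cAb uhat M istar ℓ : ℤ) = cAb uhat M' istar ℓ := by
    intro ℓ
    have hq := hsh ℓ
    rw [ha, hb] at hq
    simp only [indO] at hq
    split_ifs at hq <;> omega
  refine ⟨M istar, M' istar, ?_, ?_, ?_, ?_, ?_, ?_⟩
  · rintro x ⟨hx1, hx2⟩; exact hne (hx1.trans hx2.symm)
  · intro ℓ
    rw [cAb_step huhat h₁ hmin M ℓ, cAb_step huhat h₁ hmin M' ℓ]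
    have := hq0 ℓ
    unfold indO
    split_ifs <;> push_cast <;> omega
  · intro hcc; exact absurd hcc (not_le.2 h₁)
  · intro ℓ hH2
    exfalso
    rcases hdv_dec huhat h₁ hmin hH2 with hold | ⟨hni, _, _⟩
    · exact (hH ℓ).1 hold
    · exact hni rfl
  · intro ℓ hH2
    exfalso
    rcases hdv_dec huhat h₁ hmin hH2 with hold | ⟨hni, _, _⟩
    · exact (hH ℓ).2 hold
    · exact hni rfl
  · intro ℓ hH2
    exfalso
    rcases hcons_dec huhat h₁ hmin hH2 with hold | ⟨hni, _⟩
    · rcases hcons_imp hold with h | h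
      · exact (hH ℓ).1 h
      · exact (hH ℓ).2 h
    · exact hni rfl

lemma jinv_stepM {uhat : Fin n → ℝ} (huhat : Function.Injective uhat)
    {σ σ' : Fin n → Equiv.Perm (Fin p)} {k : Fin p → ℕ}
    {M M' : Fin n → Option (Fin p)} {istar : Fin n}
    (hagree : ∀ i, i ≠ istar → σ i = σ' i)
    (hM : IsStable uhat σ k M) (hM' : IsStable uhat σ' k M')
    {i i₁ : Fin n} (h₁ : uhat i < uhat i₁)
    (hmin : ∀ x, uhat i < uhat x → uhat i₁ ≤ uhat x)
    (hstar : i₁ ≠ istar) {w : Fin p} (hw : M i₁ = some w)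
    (hpref : Prefers (σ i₁) w (M' i₁))
    (hJ : Jinv uhat σ k M M' istar i₁) : Jinv uhat σ k M M' istar i := by
  obtain ⟨a, b, hok, hsh, hz, hm, hm', hc⟩ := hJ
  have hAw := (stable_some huhat hM hw).1
  have hBw : k w ≤ cAb uhat M' i₁ w := by
    cases hx' : M' i₁ with
    | none => exact stable_none huhat hM' hx' w
    | some j' =>
      have h2 := stable_some huhat hM' hx'
      by_contra hcon
      push_neg at hcon
      have h3 := h2.2 w hcon
      rw [← hagree i₁ hstar] at h3
      rw [hx'] at hpref
      simp only [Prefers] at hpref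
      exact absurd h3 (not_le.2 hpref)
  have hshw := hsh w
  have hbw : b = some w := by
    by_contra hcc
    rw [show indO b w = 0 from if_neg hcc] at hshw
    unfold indO at hshw
    split_ifs at hshw <;> omega
  have haw : a ≠ some w := fun hcc => hok w ⟨hcc, hbw⟩
  have hDw : (cAb uhat M i₁ w : ℤ) = (cAb uhat M' i₁ w : ℤ) - 1 := by
    rw [show indO a w = 0 from if_neg haw, show indO b w = 1 from if_pos hbw] at hshw
    omega
  have hstarlt : uhat i₁ < uhat istar := by
    by_contra hcc
    push_neg at hcc
    have h0 := (hz hcc).2.1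
    rw [h0] at hbw
    cases hbw
  have eM : ∀ ℓ, cAb uhat M i ℓ = cAb uhat M i₁ ℓ + (if w = ℓ then 1 else 0) := by
    intro ℓ
    rw [cAb_step huhat h₁ hmin M ℓ, hw]
    simp
  have eM' : ∀ ℓ, cAb uhat M' i ℓ = cAb uhat M' i₁ ℓ + (if M' i₁ = some ℓ then 1 else 0) :=
    fun ℓ => cAb_step huhat h₁ hmin M' ℓ
  have hfrozenA : k w ≤ cAb uhat M i w := by
    rw [eM w, if_pos rfl]
    omega
  have hfrozenB : k w ≤ cAb uhat M' i w := le_trans hBw (cAb_mono huhat h₁ hmin M' w)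
  have hzfalse : ¬ (uhat istar ≤ uhat i) := by
    intro hcc
    have : uhat istar < uhat istar := lt_trans (lt_of_le_of_lt hcc h₁) hstarlt
    exact lt_irrefl _ this
  by_cases hEq : ∃ t : Fin p, a = some t ∧ M' i₁ = some t
  · -- annihilation: new state is zero
    obtain ⟨t, hat, hM't⟩ := hEq
    have htw : t ≠ w := fun h => haw (h ▸ hat)
    refine ⟨none, none, by simp, ?_, ?_, ?_, ?_, ?_⟩
    · intro ℓ
      have hq := hsh ℓ
      rw [eM ℓ, eM' ℓ, hM't]
      simp only [indO, hbw, hat, Option.some.injEq] at hq ⊢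
      split_ifs at hq ⊢ <;> push_cast <;> omega
    · intro hcc; exact absurd hcc hzfalse
    · intro ℓ _; exact Or.inr (Or.inr ⟨rfl, rfl⟩)
    · intro ℓ _; exact Or.inr (Or.inr ⟨rfl, rfl⟩)
    · intro ℓ _; exact Or.inr ⟨rfl, rfl⟩
  · -- token moves: new state (a, M' i₁)
    refine ⟨a, M' i₁, fun x hx => hEq ⟨x, hx⟩, ?_, ?_, ?_, ?_, ?_⟩
    · intro ℓ
      have hq := hsh ℓ
      rw [eM ℓ, eM' ℓ]
      simp only [indO, hbw, Option.some.injEq] at hq ⊢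
      split_ifs at hq ⊢ <;> push_cast <;> omega
    · intro hcc; exact absurd hcc hzfalse
    · intro ℓ hH
      rcases hdv_dec huhat h₁ hmin hH with hold | ⟨_, hMℓ, _⟩
      · rcases hm ℓ hold with h | h | h
        · exact Or.inl h
        · exact Or.inr (Or.inl (le_trans h (cAb_mono huhat h₁ hmin M ℓ)))
        · exfalso; rw [h.2] at hbw; cases hbw
      · rw [hw] at hMℓ
        rw [← Option.some.inj hMℓ]
        exact Or.inr (Or.inl hfrozenA)
    · intro ℓ hH
      rcases hdv_dec huhat h₁ hmin hH with hold | ⟨_, hM'ℓ, _⟩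
      · rcases hm' ℓ hold with h | h | h
        · rw [h] at hbw
          rw [Option.some.inj hbw]
          exact Or.inr (Or.inl hfrozenB)
        · exact Or.inr (Or.inl (le_trans h (cAb_mono huhat h₁ hmin M' ℓ)))
        · exfalso; rw [h.2] at hbw; cases hbw
      · exact Or.inl hM'ℓ
    · intro ℓ hH
      rcases hcons_dec huhat h₁ hmin hH with hold | ⟨_, hpat⟩
      · rcases hc ℓ hold with h | h
        · exact Or.inl ⟨le_trans h.1 (cAb_mono huhat h₁ hmin M ℓ),
            le_trans h.2 (cAb_mono huhat h₁ hmin M' ℓ)⟩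
        · exfalso; rw [h.2] at hbw; cases hbw
      · rcases hpat with ⟨hMℓ, _⟩ | ⟨hM'ℓ, hp2⟩
        · rw [hw] at hMℓ
          rw [← Option.some.inj hMℓ]
          exact Or.inl ⟨hfrozenA, hfrozenB⟩
        · exfalso
          rw [hw] at hp2
          rw [hM'ℓ] at hpref
          simp only [Prefers] at hp2 hpref
          exact lt_asymm hp2 hpref

lemma jinv_all {uhat : Fin n → ℝ} (huhat : Function.Injective uhat)
    {σ σ' : Fin n → Equiv.Perm (Fin p)} {k : Fin p → ℕ}
    {M M' : Fin n → Option (Fin p)} {istar : Fin n}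
    (hagree : ∀ i, i ≠ istar → σ i = σ' i)
    (hM : IsStable uhat σ k M) (hM' : IsStable uhat σ' k M') :
    ∀ i, Jinv uhat σ k M M' istar i := by
  have hagree' : ∀ i, i ≠ istar → σ' i = σ i := fun i h => (hagree i h).symm
  have key : ∀ N (i : Fin n), (Finset.univ.filter fun x => uhat i < uhat x).card ≤ N →
      Jinv uhat σ k M M' istar i := by
    intro N
    induction N with
    | zero =>
      intro i hi
      apply jinv_base
      intro x hx
      have hxm : x ∈ (Finset.univ.filter fun x => uhat i < uhat x) := by
        simp only [mem_filter, mem_univ, true_and]; exact hx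
      have := Finset.card_pos.2 ⟨x, hxm⟩
      omega
    | succ N ih =>
      intro i hi
      rcases Finset.eq_empty_or_nonempty (Finset.univ.filter fun x => uhat i < uhat x)
        with he | hne
      · apply jinv_base
        intro x hx
        have hxm : x ∈ (Finset.univ.filter fun x => uhat i < uhat x) := by
          simp only [mem_filter, mem_univ, true_and]; exact hx
        rw [he] at hxm
        exact absurd hxm (Finset.notMem_empty x)
      · obtain ⟨i₁, hi₁mem, hi₁min⟩ := Finset.exists_min_image _ uhat hne
        simp only [mem_filter, mem_univ, true_and] at hi₁mem
        have hmin : ∀ x, uhat i < uhat x → uhat i₁ ≤ uhat x := by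
          intro x hx
          exact hi₁min x (by simp only [mem_filter, mem_univ, true_and]; exact hx)
        have hcard : (Finset.univ.filter fun x => uhat i₁ < uhat x).card ≤ N := by
          have hsub : (Finset.univ.filter fun x => uhat i₁ < uhat x) ⊆
              (Finset.univ.filter fun x => uhat i < uhat x).erase i₁ := by
            intro x hx
            simp only [mem_filter, mem_univ, true_and] at hx
            refine Finset.mem_erase.2 ⟨?_, ?_⟩
            · rintro rfl; exact lt_irrefl _ hx
            · simp only [mem_filter, mem_univ, true_and]
              exact lt_trans hi₁mem hx
          have h5 := Finset.card_le_card hsub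
          have h6 := Finset.card_erase_of_mem
            (show i₁ ∈ (Finset.univ.filter fun x => uhat i < uhat x) by
              simp only [mem_filter, mem_univ, true_and]; exact hi₁mem)
          omega
        have hJ₁ := ih i₁ hcard
        by_cases heq : M i₁ = M' i₁
        · exact jinv_stepEq huhat hi₁mem hmin heq hJ₁
        · by_cases hstar : i₁ = istar
          · subst hstar
            exact jinv_stepStar huhat hi₁mem hmin heq hJ₁
          · cases hx : M i₁ with
            | some j =>
              cases hx' : M' i₁ with
              | none =>
                exact jinv_stepM huhat hagree hM hM' hi₁mem hmin hstar hx
                  (by rw [hx']; trivial) hJ₁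
              | some j' =>
                have hjj : j ≠ j' := fun h => heq (by rw [hx, hx', h])
                have hjj2 : σ i₁ j ≠ σ i₁ j' := fun h => hjj ((σ i₁).injective h)
                rcases lt_or_gt_of_ne hjj2 with hlt | hgt
                · exact jinv_stepM huhat hagree hM hM' hi₁mem hmin hstar hx
                    (by rw [hx']; exact hlt) hJ₁
                · refine jinv_swap hagree' (jinv_stepM huhat hagree' hM' hM hi₁mem hmin hstar hx'
                    ?_ (jinv_swap hagree hJ₁))
                  rw [hx]
                  show σ' i₁ j' < σ' i₁ j
                  rw [← hagree i₁ hstar]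
                  exact hgt
            | none =>
              cases hx' : M' i₁ with
              | none => exact absurd (hx.trans hx'.symm) heq
              | some j' =>
                refine jinv_swap hagree' (jinv_stepM huhat hagree' hM' hM hi₁mem hmin hstar hx'
                  ?_ (jinv_swap hagree hJ₁))
                rw [hx]
                trivial
  intro i
  exact key _ i le_rfl

lemma part2_aux {uhat : Fin n → ℝ} (huhat : Function.Injective uhat)
    {σ σ' : Fin n → Equiv.Perm (Fin p)} {k : Fin p → ℕ}
    {M M' : Fin n → Option (Fin p)} {istar : Fin n}
    (hagree : ∀ i, i ≠ istar → σ i = σ' i)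
    (hM : IsStable uhat σ k M) (hM' : IsStable uhat σ' k M')
    {i1 i2 : Fin n} {ℓ : Fin p} (h12 : uhat i2 < uhat i1)
    (h1s : i1 ≠ istar) (h1M : M i1 = some ℓ) (h1M' : M' i1 ≠ some ℓ)
    (h2s : i2 ≠ istar) (h2M : M i2 = some ℓ) (h2M' : M' i2 ≠ some ℓ) : False := by
  obtain ⟨a, b, hok, hsh, hz, hm, hm', hc⟩ := jinv_all huhat hagree hM hM' i2
  have hH : Hdv uhat M M' istar i2 ℓ := ⟨i1, h1s, h12, h1M, h1M'⟩
  have hlt := (stable_some huhat hM h2M).1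
  rcases hm ℓ hH with h | h | h
  · have hbl : b ≠ some ℓ := fun hb => hok ℓ ⟨h, hb⟩
    have hq := hsh ℓ
    rw [show indO a ℓ = 1 from if_pos h, show indO b ℓ = 0 from if_neg hbl] at hq
    have hBl : cAb uhat M' i2 ℓ < k ℓ := by omega
    cases hx' : M' i2 with
    | none => have := stable_none huhat hM' hx' ℓ; omega
    | some j' =>
      have hne : j' ≠ ℓ := fun hh => h2M' (hh ▸ hx')
      have h2 := stable_some huhat hM' hx'
      have h3 : σ' i2 j' ≤ σ' i2 ℓ := h2.2 ℓ hBl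
      rw [← hagree i2 h2s] at h3
      by_cases hj' : cAb uhat M i2 j' < k j'
      · have h4 := (stable_some huhat hM h2M).2 j' hj'
        have h5 : σ i2 ℓ = σ i2 j' := le_antisymm h4 h3
        exact hne ((σ i2).injective h5.symm)
      · push_neg at hj'
        have hBj' := h2.1
        have hqj := hsh j'
        have haj : a = some j' := by
          by_contra hcc
          rw [show indO a j' = 0 from if_neg hcc] at hqj
          unfold indO at hqj
          split_ifs at hqj <;> omega
        rw [h] at haj
        exact hne (Option.some.inj haj).symm
  · omega
  · have hceq : ∀ ℓ', cAb uhat M i2 ℓ' = cAb uhat M' i2 ℓ' := by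
      intro ℓ'
      have hq := hsh ℓ'
      rw [h.1, h.2] at hq
      simp only [indO] at hq
      split_ifs at hq <;> omega
    have h6 := choice_eq huhat hM hM' (hagree i2 h2s) hceq
    rw [h2M] at h6
    exact h2M' h6.symm

lemma part1_aux {uhat : Fin n → ℝ} (huhat : Function.Injective uhat)
    {σ σ' : Fin n → Equiv.Perm (Fin p)} {k : Fin p → ℕ}
    {M M' : Fin n → Option (Fin p)} {istar : Fin n}
    (hagree : ∀ i, i ≠ istar → σ i = σ' i)
    (hM : IsStable uhat σ k M) (hM' : IsStable uhat σ' k M')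
    {i1 i2 : Fin n} {ℓ : Fin p} (h12 : uhat i2 < uhat i1)
    (h1s : i1 ≠ istar) (h2s : i2 ≠ istar) (h2d : M i2 ≠ M' i2)
    (hpat1 : (M i1 = some ℓ ∧ Prefers (σ i1) ℓ (M' i1)) ∨
      (M' i1 = some ℓ ∧ Prefers (σ i1) ℓ (M i1)))
    (hpat2 : (M i2 = some ℓ ∧ Prefers (σ i2) ℓ (M' i2)) ∨
      (M' i2 = some ℓ ∧ Prefers (σ i2) ℓ (M i2))) : False := by
  obtain ⟨a, b, hok, hsh, hz, hm, hm', hc⟩ := jinv_all huhat hagree hM hM' i2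
  have hHC : Hcons uhat σ M M' istar i2 ℓ := ⟨i1, h1s, h12, hpat1⟩
  rcases hc ℓ hHC with ⟨hfA, hfB⟩ | hzz
  · rcases hpat2 with ⟨h2M, _⟩ | ⟨h2M', _⟩
    · exact absurd (stable_some huhat hM h2M).1 (not_lt.2 hfA)
    · exact absurd (stable_some huhat hM' h2M').1 (not_lt.2 hfB)
  · have hceq : ∀ ℓ', cAb uhat M i2 ℓ' = cAb uhat M' i2 ℓ' := by
      intro ℓ'
      have hq := hsh ℓ'
      rw [hzz.1, hzz.2] at hq
      simp only [indO] at hq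
      split_ifs at hq <;> omega
    exact h2d (choice_eq huhat hM hM' (hagree i2 h2s) hceq)

/-- Every divergent candidate has a "consumption pattern" at some institution. -/
lemma exists_pattern {σ : Fin n → Equiv.Perm (Fin p)} {M M' : Fin n → Option (Fin p)}
    {i : Fin n} (hd : M i ≠ M' i) :
    ∃ ℓ : Fin p, (M i = some ℓ ∧ Prefers (σ i) ℓ (M' i)) ∨
      (M' i = some ℓ ∧ Prefers (σ i) ℓ (M i)) := by
  cases hx : M i with
  | some j =>
    cases hx' : M' i with
    | none => exact ⟨j, Or.inl ⟨rfl, trivial⟩⟩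
    | some j' =>
      have hjj : j ≠ j' := fun h => hd (by rw [hx, hx', h])
      have hjj2 : σ i j ≠ σ i j' := fun h => hjj ((σ i).injective h)
      rcases lt_or_gt_of_ne hjj2 with hlt | hgt
      · exact ⟨j, Or.inl ⟨rfl, hlt⟩⟩
      · exact ⟨j', Or.inr ⟨rfl, hgt⟩⟩
  | none =>
    cases hx' : M' i with
    | none => exact absurd (hx.trans hx'.symm) hd
    | some j' => exact ⟨j', Or.inr ⟨rfl, trivial⟩⟩

end SLIP

/-- If two instances share the utilities and capacities and their
preference profiles agree except possibly at one candidate `istar`, then the stable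
assignments differ on at most `p + 1` candidates; moreover for every institution `ℓ`,
at most one candidate other than `istar` is assigned to `ℓ` by `M` but not `M'`, and
at most one candidate other than `istar` is assigned to `ℓ` by `M'` but not `M`. -/
theorem stable_lipschitz_in_one_preference
    (n p : ℕ) (hp : 1 ≤ p)
    (uhat : Fin n → ℝ) (huhat : Function.Injective uhat)
    (k : Fin p → ℕ)
    (σ σ' : Fin n → Equiv.Perm (Fin p)) (istar : Fin n)
    (hagree : ∀ i, i ≠ istar → σ i = σ' i)
    (M M' : Fin n → Option (Fin p))
    (hM : IsStable uhat σ k M) (hM' : IsStable uhat σ' k M') :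
    (Finset.univ.filter fun i => M i ≠ M' i).card ≤ p + 1 ∧
      ∀ ℓ : Fin p,
        ((assignedTo M ℓ \ assignedTo M' ℓ).erase istar).card ≤ 1 ∧
        ((assignedTo M' ℓ \ assignedTo M ℓ).erase istar).card ≤ 1 := by
  classical
  have hagree' : ∀ i, i ≠ istar → σ' i = σ i := fun i h => (hagree i h).symm
  constructor
  · -- global bound
    set Dv := (Finset.univ.filter fun i => M i ≠ M' i) with hDv
    set E := Dv.erase istar with hE
    have hEmem : ∀ i ∈ E, i ≠ istar ∧ M i ≠ M' i := by
      intro i hi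
      rw [hE, Finset.mem_erase, hDv, Finset.mem_filter] at hi
      exact ⟨hi.1, hi.2.2⟩
    have hEcard : E.card ≤ p := by
      by_contra hgt
      push_neg at hgt
      have hpat : ∀ i ∈ E, ∃ ℓ : Fin p, (M i = some ℓ ∧ Prefers (σ i) ℓ (M' i)) ∨
          (M' i = some ℓ ∧ Prefers (σ i) ℓ (M i)) := by
        intro i hi
        exact SLIP.exists_pattern (hEmem i hi).2
      choose f hf using hpat
      let F : Fin n → Fin p := fun i => if h : i ∈ E then f i h else ⟨0, hp⟩
      have hcard : (Finset.univ : Finset (Fin p)).card < E.card := by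
        rw [Finset.card_univ, Fintype.card_fin]; exact hgt
      obtain ⟨i1, hi1, i2, hi2, hne, hfeq⟩ :=
        Finset.exists_ne_map_eq_of_card_lt_of_maps_to hcard
          (fun i _ => Finset.mem_univ (F i))
      have hF1 : F i1 = f i1 hi1 := dif_pos hi1
      have hF2 : F i2 = f i2 hi2 := dif_pos hi2
      have hp1 := hf i1 hi1
      have hp2 := hf i2 hi2
      have hkey : f i1 hi1 = f i2 hi2 := by rw [← hF1, ← hF2, hfeq]
      have hune : uhat i1 ≠ uhat i2 := fun h => hne (huhat h)
      rcases lt_or_gt_of_ne hune with hlt | hgt2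
      · exact SLIP.part1_aux huhat hagree hM hM' hlt (hEmem i2 hi2).1 (hEmem i1 hi1).1
          (hEmem i1 hi1).2 hp2 (hkey ▸ hp1)
      · exact SLIP.part1_aux huhat hagree hM hM' hgt2 (hEmem i1 hi1).1 (hEmem i2 hi2).1
          (hEmem i2 hi2).2 hp1 (hkey ▸ hp2)
    have hsub : Dv ⊆ insert istar E := by
      intro x hx
      by_cases hxs : x = istar
      · exact hxs ▸ Finset.mem_insert_self _ _
      · exact Finset.mem_insert_of_mem (Finset.mem_erase.2 ⟨hxs, hx⟩)
    calc Dv.card ≤ (insert istar E).card := Finset.card_le_card hsub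
      _ ≤ E.card + 1 := Finset.card_insert_le _ _
      _ ≤ p + 1 := by omega
  · -- per-institution bounds
    intro ℓ
    constructor
    · apply Finset.card_le_one.2
      intro i1 hi1 i2 hi2
      have hmem : ∀ i, i ∈ (assignedTo M ℓ \ assignedTo M' ℓ).erase istar →
          i ≠ istar ∧ M i = some ℓ ∧ M' i ≠ some ℓ := by
        intro i hi
        rw [Finset.mem_erase, Finset.mem_sdiff] at hi
        refine ⟨hi.1, ?_, ?_⟩
        · have := hi.2.1; rw [assignedTo, Finset.mem_filter] at this; exact this.2
        · intro hcc
          exact hi.2.2 (by rw [assignedTo, Finset.mem_filter]; exact ⟨Finset.mem_univ _, hcc⟩)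
      obtain ⟨h1s, h1M, h1M'⟩ := hmem i1 hi1
      obtain ⟨h2s, h2M, h2M'⟩ := hmem i2 hi2
      by_contra hne
      have hune : uhat i1 ≠ uhat i2 := fun h => hne (huhat h)
      rcases lt_or_gt_of_ne hune with hlt | hgt
      · exact SLIP.part2_aux huhat hagree hM hM' hlt h2s h2M h2M' h1s h1M h1M'
      · exact SLIP.part2_aux huhat hagree hM hM' hgt h1s h1M h1M' h2s h2M h2M'
    · apply Finset.card_le_one.2
      intro i1 hi1 i2 hi2
      have hmem : ∀ i, i ∈ (assignedTo M' ℓ \ assignedTo M ℓ).erase istar →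
          i ≠ istar ∧ M' i = some ℓ ∧ M i ≠ some ℓ := by
        intro i hi
        rw [Finset.mem_erase, Finset.mem_sdiff] at hi
        refine ⟨hi.1, ?_, ?_⟩
        · have := hi.2.1; rw [assignedTo, Finset.mem_filter] at this; exact this.2
        · intro hcc
          exact hi.2.2 (by rw [assignedTo, Finset.mem_filter]; exact ⟨Finset.mem_univ _, hcc⟩)
      obtain ⟨h1s, h1M', h1M⟩ := hmem i1 hi1
      obtain ⟨h2s, h2M', h2M⟩ := hmem i2 hi2
      by_contra hne
      have hune : uhat i1 ≠ uhat i2 := fun h => hne (huhat h)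
      rcases lt_or_gt_of_ne hune with hlt | hgt
      · exact SLIP.part2_aux huhat hagree' hM' hM hlt h2s h2M' h2M h1s h1M' h1M
      · exact SLIP.part2_aux huhat hagree' hM' hM hgt h1s h1M' h1M h2s h2M' h2M
end

section
/- Let two instances of the selection setting have the same n distinct observed utilities and the same preference profile, and capacities that agree on all institutions except one institution ℓ*, whose capacity is k_{ℓ*} in the first instance and k_{ℓ*}+1 in the second. Let M and M' be the unique stable assignments of the two instances. Then the number of candidates i with M(i) ≠ M'(i) is at most p; moreover, for every institution ℓ, at most one candidate is assigned to ℓ by M but not by M', and at most one candidate is assigned to ℓ by M' but not by M. -/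
open MeasureTheory Finset

namespace StableAux

variable {n p : ℕ}

/-- number of candidates in `S` assigned to `j`. -/
def cnt (M : Fin n → Option (Fin p)) (S : Finset (Fin n)) (j : Fin p) : ℕ :=
  (S.filter fun i => M i = some j).card

/-- candidates with strictly higher utility than `i`. -/
noncomputable def higher (uhat : Fin n → ℝ) (i : Fin n) : Finset (Fin n) :=
  Finset.univ.filter fun i' => uhat i < uhat i'

/-- institutions with remaining capacity after the candidates in `S`. -/
def avail (M : Fin n → Option (Fin p)) (k : Fin p → ℕ) (S : Finset (Fin n)) : Finset (Fin p) :=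
  Finset.univ.filter fun j => cnt M S j < k j

lemma cnt_insert (M : Fin n → Option (Fin p)) {S : Finset (Fin n)} {i : Fin n} (hi : i ∉ S)
    (j : Fin p) :
    cnt M (insert i S) j = cnt M S j + if M i = some j then 1 else 0 := by
  unfold cnt
  rw [Finset.filter_insert]
  by_cases h : M i = some j
  · rw [if_pos h, if_pos h,
      Finset.card_insert_of_notMem (fun hh => hi (Finset.mem_of_mem_filter _ hh))]
  · rw [if_neg h, if_neg h, Nat.add_zero]

lemma cnt_le_k {uhat : Fin n → ℝ} {σ : Fin n → Equiv.Perm (Fin p)} {k : Fin p → ℕ}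
    {M : Fin n → Option (Fin p)} (hM : IsStable uhat σ k M) (S : Finset (Fin n)) (j : Fin p) :
    cnt M S j ≤ k j := by
  refine le_trans (Finset.card_le_card ?_) (hM.1 j)
  intro x hx
  simp only [assignedTo, Finset.mem_filter, Finset.mem_univ, true_and]
  exact (Finset.mem_filter.mp hx).2

lemma not_mem_higher_self (uhat : Fin n → ℝ) (i : Fin n) : i ∉ higher uhat i := by
  simp [higher]

lemma blocks_of_avail {uhat : Fin n → ℝ} (huhat : Function.Injective uhat)
    {σ : Fin n → Equiv.Perm (Fin p)} {k : Fin p → ℕ} {M : Fin n → Option (Fin p)}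
    (hM : IsStable uhat σ k M) (i : Fin n) {j' : Fin p}
    (h1 : j' ∈ avail M k (higher uhat i)) (h2 : Prefers (σ i) j' (M i))
    (h3 : M i ≠ some j') : False := by
  apply hM.2 i j'
  refine ⟨h3, h2, ?_⟩
  by_cases hc : (assignedTo M j').card < k j'
  · exact Or.inl hc
  · right
    have hcnt : cnt M (higher uhat i) j' < k j' := by
      simpa [avail] using h1
    have hlt : ((higher uhat i).filter fun i' => M i' = some j').card < (assignedTo M j').card :=
      lt_of_lt_of_le hcnt (not_lt.mp hc)
    have : ∃ e ∈ assignedTo M j', e ∉ (higher uhat i).filter fun i' => M i' = some j' := by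
      by_contra hcc
      push_neg at hcc
      exact absurd (Finset.card_le_card hcc) (by omega)
    obtain ⟨i'', hi''1, hi''2⟩ := this
    refine ⟨i'', hi''1, ?_⟩
    have hMi'' : M i'' = some j' := by
      simpa [assignedTo] using hi''1
    have hnh : i'' ∉ higher uhat i := fun h => hi''2 (Finset.mem_filter.mpr ⟨h, hMi''⟩)
    have hle : uhat i'' ≤ uhat i := by
      by_contra h
      exact hnh (by simp [higher]; exact lt_of_not_ge h)
    have hne : i'' ≠ i := fun h => h3 (h ▸ hMi'')
    exact lt_of_le_of_ne hle (fun h => hne (huhat h))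

lemma stable_none {uhat : Fin n → ℝ} (huhat : Function.Injective uhat)
    {σ : Fin n → Equiv.Perm (Fin p)} {k : Fin p → ℕ} {M : Fin n → Option (Fin p)}
    (hM : IsStable uhat σ k M) {i : Fin n} (hnone : M i = none) :
    avail M k (higher uhat i) = ∅ := by
  by_contra h
  obtain ⟨j', hj'⟩ := Finset.nonempty_iff_ne_empty.mpr h
  refine blocks_of_avail huhat hM i hj' ?_ (by simp [hnone])
  rw [hnone]; trivial

lemma stable_some {uhat : Fin n → ℝ} (huhat : Function.Injective uhat)
    {σ : Fin n → Equiv.Perm (Fin p)} {k : Fin p → ℕ} {M : Fin n → Option (Fin p)}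
    (hM : IsStable uhat σ k M) {i : Fin n} {j : Fin p} (hij : M i = some j) :
    j ∈ avail M k (higher uhat i) ∧
      ∀ j' ∈ avail M k (higher uhat i), σ i j ≤ σ i j' := by
  constructor
  · have hsub : insert i ((higher uhat i).filter fun i' => M i' = some j) ⊆ assignedTo M j := by
      intro x hx
      rcases Finset.mem_insert.mp hx with h | h
      · subst h; simp [assignedTo, hij]
      · simp only [assignedTo, Finset.mem_filter, Finset.mem_univ, true_and]
        exact (Finset.mem_filter.mp h).2
    have hcard := Finset.card_le_card hsub
    rw [Finset.card_insert_of_notMem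
      (fun h => not_mem_higher_self uhat i (Finset.mem_of_mem_filter _ h))] at hcard
    have := hM.1 j
    simp only [avail, Finset.mem_filter, Finset.mem_univ, true_and, cnt]
    exact Finset.mem_filter.mpr ⟨Finset.mem_univ _, lt_of_lt_of_le (Nat.lt_of_succ_le hcard) this⟩
  · intro j' hj'
    by_contra hlt
    push_neg at hlt
    have hne : j ≠ j' := fun h => by simp [h] at hlt
    exact blocks_of_avail huhat hM i hj' (by rw [hij]; exact hlt)
      (fun h => hne (by rw [hij] at h; exact (Option.some_injective _ h)))

/-- If both stable assignments see the same available set for candidate `i`,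
they assign `i` identically. -/
lemma choice_eq {uhat : Fin n → ℝ} (huhat : Function.Injective uhat)
    {σ : Fin n → Equiv.Perm (Fin p)} {k k' : Fin p → ℕ} {M M' : Fin n → Option (Fin p)}
    (hM : IsStable uhat σ k M) (hM' : IsStable uhat σ k' M') (i : Fin n)
    (hA : avail M k (higher uhat i) = avail M' k' (higher uhat i)) :
    M i = M' i := by
  match h1 : M i, h2 : M' i with
  | none, none => rfl
  | none, some j2 =>
      have := stable_none huhat hM h1
      have h := (stable_some huhat hM' h2).1
      rw [← hA, this] at h
      exact absurd h (Finset.notMem_empty _)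
  | some j1, none =>
      have := stable_none huhat hM' h2
      have h := (stable_some huhat hM h1).1
      rw [hA, this] at h
      exact absurd h (Finset.notMem_empty _)
  | some j1, some j2 =>
      obtain ⟨hm1, hmin1⟩ := stable_some huhat hM h1
      obtain ⟨hm2, hmin2⟩ := stable_some huhat hM' h2
      have e1 := hmin1 j2 (hA ▸ hm2)
      have e2 := hmin2 j1 (hA ▸ hm1)
      have : (σ i) j1 = (σ i) j2 := le_antisymm e1 e2
      rw [(σ i).injective this]

end StableAux

namespace StableAux

variable {n p : ℕ}

section InvDef

variable (M M' : Fin n → Option (Fin p)) (k : Fin p → ℕ) (lstar : Fin p)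

def Gs (ℓ : Fin p) (S : Finset (Fin n)) : Finset (Fin n) :=
  S.filter fun i => M' i = some ℓ ∧ M i ≠ some ℓ

def Ls (ℓ : Fin p) (S : Finset (Fin n)) : Finset (Fin n) :=
  S.filter fun i => M i = some ℓ ∧ M' i ≠ some ℓ

def Df (S : Finset (Fin n)) : Finset (Fin n) := S.filter fun i => M i ≠ M' i

def ActiveInv (S : Finset (Fin n)) : Prop :=
  ∃ (ℓ0 : Fin p) (P : Finset (Fin p)), ℓ0 ∉ P ∧ lstar ∈ insert ℓ0 P ∧
    (∀ ℓ ∈ P, cnt M S ℓ = k ℓ) ∧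
    (∀ ℓ, cnt M' S ℓ + (if ℓ = ℓ0 then 1 else 0) = cnt M S ℓ + (if ℓ = lstar then 1 else 0)) ∧
    (∀ ℓ, ℓ ∉ P → Gs M M' ℓ S = ∅) ∧ (∀ ℓ, (Gs M M' ℓ S).card ≤ 1) ∧
    (∀ ℓ, ℓ ∉ (insert ℓ0 P).erase lstar → Ls M M' ℓ S = ∅) ∧
    (∀ ℓ, (Ls M M' ℓ S).card ≤ 1) ∧
    (Df M M' S).card ≤ P.card

def DoneInv (S : Finset (Fin n)) : Prop :=
  (∀ ℓ, cnt M' S ℓ = cnt M S ℓ + (if ℓ = lstar then 1 else 0)) ∧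
  (∀ ℓ, (Gs M M' ℓ S).card ≤ 1) ∧ (∀ ℓ, (Ls M M' ℓ S).card ≤ 1) ∧ (Df M M' S).card ≤ p

def Inv (S : Finset (Fin n)) : Prop := ActiveInv M M' k lstar S ∨ DoneInv M M' lstar S

end InvDef

section InsertLemmas

variable {M M' : Fin n → Option (Fin p)} {i : Fin n} {S : Finset (Fin n)} (hiS : i ∉ S)

lemma Gs_insert_pos (ℓ : Fin p) (h : M' i = some ℓ ∧ M i ≠ some ℓ) :
    Gs M M' ℓ (insert i S) = insert i (Gs M M' ℓ S) := by
  unfold Gs; rw [Finset.filter_insert, if_pos h]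

lemma Gs_insert_neg (ℓ : Fin p) (h : ¬(M' i = some ℓ ∧ M i ≠ some ℓ)) :
    Gs M M' ℓ (insert i S) = Gs M M' ℓ S := by
  unfold Gs; rw [Finset.filter_insert, if_neg h]

lemma Ls_insert_pos (ℓ : Fin p) (h : M i = some ℓ ∧ M' i ≠ some ℓ) :
    Ls M M' ℓ (insert i S) = insert i (Ls M M' ℓ S) := by
  unfold Ls; rw [Finset.filter_insert, if_pos h]

lemma Ls_insert_neg (ℓ : Fin p) (h : ¬(M i = some ℓ ∧ M' i ≠ some ℓ)) :
    Ls M M' ℓ (insert i S) = Ls M M' ℓ S := by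
  unfold Ls; rw [Finset.filter_insert, if_neg h]

lemma Df_insert_pos (h : M i ≠ M' i) :
    Df M M' (insert i S) = insert i (Df M M' S) := by
  unfold Df; rw [Finset.filter_insert, if_pos h]

lemma Df_insert_neg (h : ¬ M i ≠ M' i) :
    Df M M' (insert i S) = Df M M' S := by
  unfold Df; rw [Finset.filter_insert, if_neg h]

end InsertLemmas

end StableAux

namespace StableAux

variable {n p : ℕ}

lemma mem_avail {M : Fin n → Option (Fin p)} {k : Fin p → ℕ} {S : Finset (Fin n)} {j : Fin p} :
    j ∈ avail M k S ↔ cnt M S j < k j := by simp [avail]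

lemma ite_cases (a b : Fin p) :
    (a = b ∧ (if a = b then (1:ℕ) else 0) = 1) ∨ (a ≠ b ∧ (if a = b then (1:ℕ) else 0) = 0) := by
  by_cases h : a = b <;> simp [h]

lemma cnt_insert_some {M : Fin n → Option (Fin p)} {S : Finset (Fin n)} {i : Fin n}
    (hi : i ∉ S) {j0 : Fin p} (h : M i = some j0) (ℓ : Fin p) :
    cnt M (insert i S) ℓ = cnt M S ℓ + if ℓ = j0 then 1 else 0 := by
  rw [cnt_insert M hi, h]
  by_cases e : ℓ = j0
  · subst e; simp
  · rw [if_neg (fun hh : some j0 = some ℓ => e (Option.some_injective _ hh).symm), if_neg e]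

lemma cnt_insert_none {M : Fin n → Option (Fin p)} {S : Finset (Fin n)} {i : Fin n}
    (hi : i ∉ S) (h : M i = none) (ℓ : Fin p) :
    cnt M (insert i S) ℓ = cnt M S ℓ := by
  rw [cnt_insert M hi, h]
  simp

lemma step {uhat : Fin n → ℝ} (huhat : Function.Injective uhat)
    {σ : Fin n → Equiv.Perm (Fin p)} {k k' : Fin p → ℕ} {lstar : Fin p}
    {M M' : Fin n → Option (Fin p)}
    (hM : IsStable uhat σ k M) (hM' : IsStable uhat σ k' M')
    (hk' : ∀ ℓ, k' ℓ = k ℓ + if ℓ = lstar then 1 else 0)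
    (i : Fin n) {S : Finset (Fin n)} (hS : S = higher uhat i)
    (hInv : Inv M M' k lstar S) :
    Inv M M' k lstar (insert i S) := by
  have hiS : i ∉ S := hS ▸ not_mem_higher_self uhat i
  rcases hInv with ⟨ℓ0, P, hl0P, hls, hdead, hcnt, hGe, hG1, hLe, hL1, hD⟩ | ⟨hc, hG, hL, hD⟩
  · -- Active case
    have hsub : ∀ j, j ∈ avail M k S → j ∈ avail M' k' S := by
      intro j hj
      rw [mem_avail] at hj ⊢
      have H1 := hcnt j; have H2 := hk' j
      omega
    have hdiff : ∀ j, j ∈ avail M' k' S → j ≠ ℓ0 → j ∈ avail M k S := by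
      intro j hj hne
      rw [mem_avail] at hj ⊢
      have H1 := hcnt j; have H2 := hk' j
      have E1 : (if j = ℓ0 then (1:ℕ) else 0) = 0 := if_neg hne
      omega
    rcases h1 : M i with _ | j <;> rcases h2 : M' i with _ | j2
    · -- both unassigned: nothing changes
      left
      refine ⟨ℓ0, P, hl0P, hls, fun ℓ hℓ => ?_, fun ℓ => ?_, fun ℓ hℓ => ?_, fun ℓ => ?_,
        fun ℓ hℓ => ?_, fun ℓ => ?_, ?_⟩
      · rw [cnt_insert_none hiS h1]; exact hdead ℓ hℓ
      · rw [cnt_insert_none hiS h1, cnt_insert_none hiS h2]; exact hcnt ℓ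
      · rw [Gs_insert_neg ℓ (by simp [h2])]; exact hGe ℓ hℓ
      · rw [Gs_insert_neg ℓ (by simp [h2])]; exact hG1 ℓ
      · rw [Ls_insert_neg ℓ (by simp [h1])]; exact hLe ℓ hℓ
      · rw [Ls_insert_neg ℓ (by simp [h1])]; exact hL1 ℓ
      · rw [Df_insert_neg (by simp [h1, h2])]; exact hD
    · -- M i = none, M' i = some j2 : the chain terminates, j2 must be ℓ0
      have hA : avail M k S = ∅ := hS ▸ stable_none huhat hM h1
      have hj2 : j2 ∈ avail M' k' S := by
        rw [hS]; exact (stable_some huhat hM' h2).1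
      have hj2l0 : j2 = ℓ0 := by
        by_contra hne
        have := hdiff j2 hj2 hne
        rw [hA] at this
        exact absurd this (Finset.notMem_empty _)
      right
      refine ⟨fun ℓ => ?_, fun ℓ => ?_, fun ℓ => ?_, ?_⟩
      · rw [cnt_insert_none hiS h1, cnt_insert_some hiS h2 ℓ]
        have H1 := hcnt ℓ
        rw [← hj2l0] at H1
        omega
      · by_cases e : ℓ = j2
        · subst e
          rw [Gs_insert_pos ℓ ⟨h2, by simp [h1]⟩, hGe ℓ (hj2l0 ▸ hl0P)]
          simp
        · rw [Gs_insert_neg ℓ (fun hh => e (Option.some_injective _ (h2.symm.trans hh.1)).symm)]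
          exact hG1 ℓ
      · rw [Ls_insert_neg ℓ (by simp [h1])]; exact hL1 ℓ
      · rw [Df_insert_pos (by simp [h1, h2])]
        have hPc : (insert ℓ0 P).card ≤ p := by
          simpa using Finset.card_le_univ (insert ℓ0 P)
        rw [Finset.card_insert_of_notMem hl0P] at hPc
        have := Finset.card_insert_le i (Df M M' S)
        omega
    · -- M i = some j, M' i = none : impossible
      exfalso
      have hA' : avail M' k' S = ∅ := hS ▸ stable_none huhat hM' h2
      have hj : j ∈ avail M k S := by rw [hS]; exact (stable_some huhat hM h1).1
      have := hsub j hj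
      rw [hA'] at this
      exact absurd this (Finset.notMem_empty _)
    · -- both assigned
      have hjA : j ∈ avail M k S := by rw [hS]; exact (stable_some huhat hM h1).1
      have hjmin : ∀ j' ∈ avail M k S, σ i j ≤ σ i j' := by
        rw [hS]; exact (stable_some huhat hM h1).2
      have hj2A : j2 ∈ avail M' k' S := by rw [hS]; exact (stable_some huhat hM' h2).1
      have hj2min : ∀ j' ∈ avail M' k' S, σ i j2 ≤ σ i j' := by
        rw [hS]; exact (stable_some huhat hM' h2).2
      have hjP : j ∉ P := by
        intro hjP
        have := hdead j hjP
        rw [mem_avail] at hjA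
        omega
      rcases eq_or_ne j j2 with rfl | hne
      · -- same institution: nothing changes
        left
        refine ⟨ℓ0, P, hl0P, hls, fun ℓ hℓ => ?_, fun ℓ => ?_, fun ℓ hℓ => ?_, fun ℓ => ?_,
          fun ℓ hℓ => ?_, fun ℓ => ?_, ?_⟩
        · rw [cnt_insert_some hiS h1 ℓ, if_neg (fun hh : ℓ = j => hjP (hh ▸ hℓ)), Nat.add_zero]
          exact hdead ℓ hℓ
        · rw [cnt_insert_some hiS h1 ℓ, cnt_insert_some hiS h2 ℓ]
          have H1 := hcnt ℓ
          omega
        · rw [Gs_insert_neg ℓ (by rw [h1, h2]; tauto)]; exact hGe ℓ hℓ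
        · rw [Gs_insert_neg ℓ (by rw [h1, h2]; tauto)]; exact hG1 ℓ
        · rw [Ls_insert_neg ℓ (by rw [h1, h2]; tauto)]; exact hLe ℓ hℓ
        · rw [Ls_insert_neg ℓ (by rw [h1, h2]; tauto)]; exact hL1 ℓ
        · rw [Df_insert_neg (by rw [h1, h2]; simp)]; exact hD
      · -- the chain moves from ℓ0 to j
        have hj2l0 : j2 = ℓ0 := by
          by_contra hne2
          have hj2Ak : j2 ∈ avail M k S := hdiff j2 hj2A hne2
          have e1 := hjmin j2 hj2Ak
          have e2 := hj2min j (hsub j hjA)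
          exact hne ((σ i).injective (le_antisymm e1 e2))
        subst hj2l0
        have hjl0 : j ≠ j2 := hne
        have hl0nA : j2 ∉ avail M k S := by
          intro hl0A
          have e1 := hjmin j2 hl0A
          have e2 := hj2min j (hsub j hjA)
          exact hne ((σ i).injective (le_antisymm e1 e2))
        have hcl0 : cnt M S j2 = k j2 := by
          rw [mem_avail] at hl0nA
          have := cnt_le_k hM S j2
          omega
        have hjls : j ≠ lstar := by
          rcases Finset.mem_insert.mp hls with h | h
          · exact fun hh => hjl0 (hh.trans h)
          · exact fun hh => hjP (hh ▸ h)
        left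
        refine ⟨j, insert j2 P, by simp [hjl0, hjP], Finset.mem_insert_of_mem hls,
          fun ℓ hℓ => ?_, fun ℓ => ?_, fun ℓ hℓ => ?_, fun ℓ => ?_, fun ℓ hℓ => ?_,
          fun ℓ => ?_, ?_⟩
        · rw [cnt_insert_some hiS h1 ℓ]
          rcases Finset.mem_insert.mp hℓ with rfl | hℓP
          · rw [if_neg (Ne.symm hjl0), Nat.add_zero]; exact hcl0
          · rw [if_neg (fun hh : ℓ = j => hjP (hh ▸ hℓP)), Nat.add_zero]; exact hdead ℓ hℓP
        · rw [cnt_insert_some hiS h1 ℓ, cnt_insert_some hiS h2 ℓ]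
          have H1 := hcnt ℓ
          omega
        · have hℓP : ℓ ∉ P := fun hh => hℓ (Finset.mem_insert_of_mem hh)
          have hℓl0 : ℓ ≠ j2 := fun hh => hℓ (hh ▸ Finset.mem_insert_self j2 P)
          rw [Gs_insert_neg ℓ (fun hh => hℓl0 (Option.some_injective _ (h2.symm.trans hh.1)).symm)]
          exact hGe ℓ hℓP
        · by_cases e : ℓ = j2
          · subst e
            rw [Gs_insert_pos ℓ ⟨h2, by
                rw [h1]
                exact fun hh => hjl0 (Option.some_injective _ hh)⟩,
              hGe ℓ hl0P]
            simp
          · rw [Gs_insert_neg ℓ (fun hh => e (Option.some_injective _ (h2.symm.trans hh.1)).symm)]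
            exact hG1 ℓ
        · have hℓj : ℓ ≠ j := by
            intro hh
            subst hh
            exact hℓ (Finset.mem_erase.mpr ⟨hjls, Finset.mem_insert_self _ _⟩)
          have hℓold : ℓ ∉ (insert j2 P).erase lstar := by
            intro hh
            rcases Finset.mem_erase.mp hh with ⟨hh1, hh2⟩
            exact hℓ (Finset.mem_erase.mpr ⟨hh1, Finset.mem_insert_of_mem hh2⟩)
          rw [Ls_insert_neg ℓ (fun hh => hℓj (Option.some_injective _ (h1.symm.trans hh.1)).symm)]
          exact hLe ℓ hℓold
        · by_cases e : ℓ = j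
          · subst e
            have hLj : Ls M M' ℓ S = ∅ := by
              apply hLe ℓ
              intro hh
              rcases Finset.mem_erase.mp hh with ⟨_, hh3⟩
              rcases Finset.mem_insert.mp hh3 with h | h
              · exact hjl0 h
              · exact hjP h
            rw [Ls_insert_pos ℓ ⟨h1, by
                rw [h2]
                exact fun hh => hjl0 (Option.some_injective _ hh).symm⟩, hLj]
            simp
          · rw [Ls_insert_neg ℓ (fun hh => e (Option.some_injective _ (h1.symm.trans hh.1)).symm)]
            exact hL1 ℓ
        · rw [Df_insert_pos (by
              rw [h1, h2]
              exact fun hh => hjl0 (Option.some_injective _ hh)),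
            Finset.card_insert_of_notMem hl0P]
          have := Finset.card_insert_le i (Df M M' S)
          omega
  · -- Done case
    have hAA : avail M k S = avail M' k' S := by
      ext j
      rw [mem_avail, mem_avail, hc j, hk' j]
      omega
    have heq : M i = M' i := by
      apply choice_eq huhat hM hM' i
      rw [← hS]; exact hAA
    right
    refine ⟨fun ℓ => ?_, fun ℓ => ?_, fun ℓ => ?_, ?_⟩
    · rw [cnt_insert M hiS, cnt_insert M' hiS, hc ℓ, heq]
      omega
    · rw [Gs_insert_neg ℓ (by rw [heq]; tauto)]; exact hG ℓ
    · rw [Ls_insert_neg ℓ (by rw [← heq]; tauto)]; exact hL ℓ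
    · rw [Df_insert_neg (by simp [heq])]; exact hD

end StableAux

namespace StableAux

variable {n p : ℕ}

lemma take_toFinset_eq_higher (uhat : Fin n → ℝ) (huhat : Function.Injective uhat)
    (L : List (Fin n)) (hsort : L.Pairwise (fun a b => uhat b ≤ uhat a)) (hnodup : L.Nodup)
    (hmem : ∀ x, x ∈ L) (t : ℕ) (ht : t < L.length) :
    (L.take t).toFinset = higher uhat (L.get ⟨t, ht⟩) := by
  have hpw := List.pairwise_iff_get.mp hsort
  ext x
  simp only [List.mem_toFinset, higher, Finset.mem_filter, Finset.mem_univ, true_and]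
  constructor
  · intro hx
    obtain ⟨s, hs, hsx⟩ := List.mem_take_iff_getElem.mp hx
    have hslen : s < L.length := lt_of_lt_of_le hs (min_le_right _ _)
    have hst : s < t := lt_of_lt_of_le hs (min_le_left _ _)
    have hle : uhat (L.get ⟨t, ht⟩) ≤ uhat (L.get ⟨s, hslen⟩) :=
      hpw ⟨s, hslen⟩ ⟨t, ht⟩ hst
    have hne : L.get ⟨s, hslen⟩ ≠ L.get ⟨t, ht⟩ := by
      intro hh
      have := hnodup.get_inj_iff.mp hh
      exact absurd (Fin.val_eq_of_eq this) (Nat.ne_of_lt hst)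
    have : L.get ⟨s, hslen⟩ = x := hsx
    rw [this] at hle hne
    exact lt_of_le_of_ne hle (fun hh => hne (huhat hh.symm))
  · intro hx
    obtain ⟨⟨s, hslen⟩, hsx⟩ := List.mem_iff_get.mp (hmem x)
    have hst : s < t := by
      by_contra hge
      push_neg at hge
      rcases eq_or_lt_of_le hge with rfl | hlt
      · rw [hsx] at hx
        exact lt_irrefl _ hx
      · have := hpw ⟨t, ht⟩ ⟨s, hslen⟩ hlt
        rw [hsx] at this
        exact absurd hx (not_lt.mpr this)
    apply List.mem_take_iff_getElem.mpr
    exact ⟨s, lt_min hst hslen, hsx⟩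

lemma inv_empty (M M' : Fin n → Option (Fin p)) (k : Fin p → ℕ) (lstar : Fin p) :
    Inv M M' k lstar (∅ : Finset (Fin n)) := by
  left
  refine ⟨lstar, ∅, Finset.notMem_empty _, Finset.mem_insert_self _ _, by simp,
    fun ℓ => by simp [cnt], fun ℓ _ => by simp [Gs], fun ℓ => by simp [Gs],
    fun ℓ _ => by simp [Ls], fun ℓ => by simp [Ls], by simp [Df]⟩

lemma inv_univ {uhat : Fin n → ℝ} (huhat : Function.Injective uhat)
    {σ : Fin n → Equiv.Perm (Fin p)} {k k' : Fin p → ℕ} {lstar : Fin p}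
    {M M' : Fin n → Option (Fin p)}
    (hM : IsStable uhat σ k M) (hM' : IsStable uhat σ k' M')
    (hk' : ∀ ℓ, k' ℓ = k ℓ + if ℓ = lstar then 1 else 0) :
    Inv M M' k lstar (Finset.univ : Finset (Fin n)) := by
  classical
  let r : Fin n → Fin n → Prop := fun a b => uhat b ≤ uhat a
  haveI : DecidableRel r := fun a b => Real.decidableLE _ _
  haveI : IsTrans (Fin n) r := ⟨fun a b c hab hbc => le_trans hbc hab⟩
  haveI : Std.Antisymm r := ⟨fun a b h1 h2 => huhat (le_antisymm h2 h1)⟩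
  haveI : Std.Total r := ⟨fun a b => le_total (uhat b) (uhat a)⟩
  set L : List (Fin n) := Finset.sort Finset.univ r with hL
  have hsort : L.Pairwise r := Finset.pairwise_sort _ r
  have hnodup : L.Nodup := Finset.sort_nodup _ r
  have hmem : ∀ x, x ∈ L := fun x => by rw [hL, Finset.mem_sort]; exact Finset.mem_univ x
  have hlen : L.length = n := by rw [Finset.length_sort, Finset.card_univ, Fintype.card_fin]
  have key : ∀ t, t ≤ n → Inv M M' k lstar (L.take t).toFinset := by
    intro t
    induction t with
    | zero => intro _; simpa using inv_empty M M' k lstar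
    | succ t ih =>
      intro ht
      have ht' : t < L.length := by omega
      have hstep := step huhat hM hM' hk' (L.get ⟨t, ht'⟩)
        (take_toFinset_eq_higher uhat huhat L hsort hnodup hmem t ht') (ih (by omega))
      have htake : L.take (t + 1) = L.take t ++ [L.get ⟨t, ht'⟩] := by
        rw [List.take_succ]
        congr
        rw [List.getElem?_eq_getElem ht']
        rfl
      rw [htake, List.toFinset_append]
      have : ([L.get ⟨t, ht'⟩] : List (Fin n)).toFinset = {L.get ⟨t, ht'⟩} := by simp
      rw [this, Finset.union_comm]
      rw [← Finset.insert_eq]; exact hstep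
  have := key n (le_refl n)
  rw [List.take_of_length_le (le_of_eq hlen)] at this
  rwa [show L.toFinset = Finset.univ from Finset.sort_toFinset Finset.univ r] at this

end StableAux

/-- If two instances share the utilities and preferences and their
capacities agree except at one institution `lstar`, whose capacity is one larger in the
second instance, then the stable assignments differ on at most `p` candidates; moreover
for every institution `ℓ`, at most one candidate is assigned to `ℓ` by `M` but not `M'`,
and at most one candidate is assigned to `ℓ` by `M'` but not `M`. -/
theorem stable_lipschitz_in_one_capacity
    (n p : ℕ) (hp : 1 ≤ p)
    (uhat : Fin n → ℝ) (huhat : Function.Injective uhat)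
    (σ : Fin n → Equiv.Perm (Fin p))
    (k k' : Fin p → ℕ) (lstar : Fin p)
    (hagree : ∀ ℓ, ℓ ≠ lstar → k' ℓ = k ℓ) (hstar : k' lstar = k lstar + 1)
    (M M' : Fin n → Option (Fin p))
    (hM : IsStable uhat σ k M) (hM' : IsStable uhat σ k' M') :
    (Finset.univ.filter fun i => M i ≠ M' i).card ≤ p ∧
      ∀ ℓ : Fin p,
        (assignedTo M ℓ \ assignedTo M' ℓ).card ≤ 1 ∧
        (assignedTo M' ℓ \ assignedTo M ℓ).card ≤ 1 := by
  have hk' : ∀ ℓ, k' ℓ = k ℓ + if ℓ = lstar then 1 else 0 := by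
    intro ℓ
    by_cases h : ℓ = lstar
    · subst h; simp [hstar]
    · simp [h, hagree ℓ h]
  have hInv := StableAux.inv_univ huhat hM hM' hk'
  have hGs : ∀ ℓ, StableAux.Gs M M' ℓ Finset.univ = assignedTo M' ℓ \ assignedTo M ℓ := by
    intro ℓ
    ext x
    simp [StableAux.Gs, assignedTo, Finset.mem_sdiff]
  have hLs : ∀ ℓ, StableAux.Ls M M' ℓ Finset.univ = assignedTo M ℓ \ assignedTo M' ℓ := by
    intro ℓ
    ext x
    simp [StableAux.Ls, assignedTo, Finset.mem_sdiff]
  have hDfc : (Finset.univ.filter fun i => M i ≠ M' i) = StableAux.Df M M' Finset.univ := rfl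
  constructor
  · rw [hDfc]
    rcases hInv with ⟨ℓ0, P, hl0P, _, _, _, _, _, _, _, hD⟩ | ⟨_, _, _, hD⟩
    · have hcard : (insert ℓ0 P).card ≤ p := by
        simpa using Finset.card_le_univ (insert ℓ0 P)
      rw [Finset.card_insert_of_notMem hl0P] at hcard
      omega
    · exact hD
  · intro ℓ
    rcases hInv with ⟨ℓ0, P, _, _, _, _, _, hG1, _, hL1, _⟩ | ⟨_, hG1, hL1, _⟩ <;>
      exact ⟨by rw [← hLs ℓ]; exact hL1 ℓ, by rw [← hGs ℓ]; exact hG1 ℓ⟩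
end

section
/- Let two instances of the selection setting have the same n distinct observed utilities and the same preference profile, with capacity vectors (k_1,…,k_p) and (k'_1,…,k'_p), and set D := Σ_ℓ |k_ℓ − k'_ℓ|. Then the unique stable assignments M and M' of the two instances differ on at most p·D candidates, i.e. |{i : M(i) ≠ M'(i)}| ≤ p·D. -/
open MeasureTheory Finset

/-! ### Auxiliary definitions: the greedy (serial dictatorship) assignment -/

/-- The most preferred institution (w.r.t. the ranking `π`) with remaining capacity `> 0`,
if any. -/
def pick {p : ℕ} (π : Equiv.Perm (Fin p)) (c : Fin p → ℕ) : Option (Fin p) :=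
  if h : (Finset.univ.filter fun ℓ => 0 < c ℓ).Nonempty then
    some (π.symm (((Finset.univ.filter fun ℓ => 0 < c ℓ).image π).min' (h.image π)))
  else none

/-- Decrement capacities at the chosen institution (if any). -/
def dec {p : ℕ} (c : Fin p → ℕ) : Option (Fin p) → (Fin p → ℕ)
  | none => c
  | some j => Function.update c j (c j - 1)

/-- Serial dictatorship along a list of candidates. -/
def greedy {n p : ℕ} (σ : Fin n → Equiv.Perm (Fin p)) :
    List (Fin n) → (Fin p → ℕ) → Fin n → Option (Fin p)
  | [], _, _ => none
  | i :: L, c, x =>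
      if x = i then pick (σ i) c else greedy σ L (dec c (pick (σ i) c)) x

lemma pick_eq_none_iff {p : ℕ} (π : Equiv.Perm (Fin p)) (c : Fin p → ℕ) :
    pick π c = none ↔ ∀ ℓ, c ℓ = 0 := by
  constructor
  · intro he ℓ
    by_contra hc
    have h : (Finset.univ.filter fun ℓ => 0 < c ℓ).Nonempty :=
      ⟨ℓ, Finset.mem_filter.2 ⟨Finset.mem_univ _, Nat.pos_of_ne_zero hc⟩⟩
    unfold pick at he
    rw [dif_pos h] at he
    simp at he
  · intro h0
    unfold pick
    rw [dif_neg]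
    rintro ⟨ℓ, hℓ⟩
    simp [h0 ℓ] at hℓ

lemma pick_eq_some_iff {p : ℕ} (π : Equiv.Perm (Fin p)) (c : Fin p → ℕ) (m : Fin p) :
    pick π c = some m ↔ 0 < c m ∧ ∀ ℓ, 0 < c ℓ → π m ≤ π ℓ := by
  unfold pick
  split_ifs with h
  · constructor
    · intro he
      have he' : π.symm (((Finset.univ.filter fun ℓ => 0 < c ℓ).image π).min' (h.image π)) = m :=
        Option.some_injective _ he
      obtain ⟨ℓ₀, hℓ₀S, hℓ₀⟩ := Finset.mem_image.1
        (Finset.min'_mem ((Finset.univ.filter fun ℓ => 0 < c ℓ).image π) (h.image π))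
      have hm : m = ℓ₀ := by
        rw [← he', ← hℓ₀, Equiv.symm_apply_apply]
      constructor
      · rw [hm]
        exact (Finset.mem_filter.1 hℓ₀S).2
      · intro ℓ hℓ
        have hmem : π ℓ ∈ (Finset.univ.filter fun ℓ => 0 < c ℓ).image π :=
          Finset.mem_image_of_mem _ (Finset.mem_filter.2 ⟨Finset.mem_univ _, hℓ⟩)
        have hle := Finset.min'_le _ _ hmem
        calc π m = ((Finset.univ.filter fun ℓ => 0 < c ℓ).image π).min' (h.image π) := by
              rw [← he', Equiv.apply_symm_apply]
          _ ≤ π ℓ := hle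
    · rintro ⟨hm, hmin⟩
      congr 1
      have hmem : π m ∈ (Finset.univ.filter fun ℓ => 0 < c ℓ).image π :=
        Finset.mem_image_of_mem _ (Finset.mem_filter.2 ⟨Finset.mem_univ _, hm⟩)
      have h1 : ((Finset.univ.filter fun ℓ => 0 < c ℓ).image π).min' (h.image π) ≤ π m :=
        Finset.min'_le _ _ hmem
      obtain ⟨ℓ₀, hℓ₀S, hℓ₀⟩ := Finset.mem_image.1
        (Finset.min'_mem ((Finset.univ.filter fun ℓ => 0 < c ℓ).image π) (h.image π))
      have h2 : π m ≤ ((Finset.univ.filter fun ℓ => 0 < c ℓ).image π).min' (h.image π) := by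
        rw [← hℓ₀]
        exact hmin ℓ₀ (Finset.mem_filter.1 hℓ₀S).2
      have h3 : ((Finset.univ.filter fun ℓ => 0 < c ℓ).image π).min' (h.image π) = π m :=
        le_antisymm h1 h2
      rw [h3, Equiv.symm_apply_apply]
  · constructor
    · intro he; exact absurd he (by simp)
    · rintro ⟨hm, -⟩
      exact absurd ⟨m, Finset.mem_filter.2 ⟨Finset.mem_univ _, hm⟩⟩ h

/-! ### The unit-capacity-change lemma -/

lemma greedy_diff_unit {n p : ℕ} (σ : Fin n → Equiv.Perm (Fin p)) (L : List (Fin n)) :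
    ∀ (c c' : Fin p → ℕ) (j : Fin p) (R : Finset (Fin p)),
      c' j = c j + 1 → (∀ ℓ, ℓ ≠ j → c' ℓ = c ℓ) →
      (∀ ℓ ∈ R, c ℓ = 0) → j ∉ R →
      (Finset.univ.filter fun x => greedy σ L c x ≠ greedy σ L c' x).card ≤ p - R.card := by
  induction L with
  | nil => intro c c' j R h1 h2 hR hjR; simp [greedy]
  | cons i L ih =>
    intro c c' j R h1 h2 hR hjR
    have hRcard : R.card + 1 ≤ p := by
      have h3 : (insert j R).card ≤ p := by
        simpa using Finset.card_le_card (Finset.subset_univ (insert j R))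
      rwa [Finset.card_insert_of_notMem hjR] at h3
    obtain ⟨m', hm'⟩ : ∃ m', pick (σ i) c' = some m' := by
      cases ho' : pick (σ i) c' with
      | none =>
        have := (pick_eq_none_iff _ _).1 ho' j
        omega
      | some m' => exact ⟨m', rfl⟩
    by_cases heq : pick (σ i) c = pick (σ i) c'
    · -- matching step
      have hsub : (Finset.univ.filter fun x => greedy σ (i::L) c x ≠ greedy σ (i::L) c' x)
          ⊆ Finset.univ.filter fun x =>
              greedy σ L (dec c (pick (σ i) c)) x ≠ greedy σ L (dec c' (pick (σ i) c')) x := by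
        intro x hx
        simp only [Finset.mem_filter, Finset.mem_univ, true_and] at hx ⊢
        simp only [greedy] at hx
        by_cases hxi : x = i
        · rw [if_pos hxi, if_pos hxi, heq] at hx
          exact absurd rfl hx
        · rwa [if_neg hxi, if_neg hxi] at hx
      refine le_trans (Finset.card_le_card hsub) ?_
      rw [heq, hm']
      obtain ⟨hm'pos, -⟩ := (pick_eq_some_iff _ _ _).1 (heq.trans hm' : pick (σ i) c = some m')
      apply ih _ _ j R ?_ ?_ ?_ hjR
      · -- new difference still at j
        simp only [dec]
        rcases eq_or_ne j m' with rfl | hjm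
        · rw [Function.update_self, Function.update_self]
          omega
        · rw [Function.update_of_ne hjm, Function.update_of_ne hjm]
          omega
      · intro ℓ hℓ
        simp only [dec]
        have h2' := h2 ℓ hℓ
        rcases eq_or_ne ℓ m' with rfl | hlm
        · rw [Function.update_self, Function.update_self, h2']
        · rw [Function.update_of_ne hlm, Function.update_of_ne hlm, h2']
      · intro ℓ hℓ
        have hc0 := hR ℓ hℓ
        simp only [dec]
        rcases eq_or_ne ℓ m' with rfl | hlm
        · rw [Function.update_self]; omega
        · rw [Function.update_of_ne hlm]; exact hc0
    · -- mismatching step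
      have hm'j : m' = j := by
        by_contra hne
        apply heq
        rw [hm', pick_eq_some_iff]
        obtain ⟨hpos', hmin'⟩ := (pick_eq_some_iff _ _ _).1 hm'
        refine ⟨by have := h2 m' hne; omega, fun ℓ hℓ => hmin' ℓ ?_⟩
        rcases eq_or_ne ℓ j with rfl | hlj
        · omega
        · rw [h2 ℓ hlj]; exact hℓ
      subst hm'j
      have hcj0 : c m' = 0 := by
        by_contra h
        apply heq
        rw [hm', pick_eq_some_iff]
        obtain ⟨-, hmin'⟩ := (pick_eq_some_iff _ _ _).1 hm'
        refine ⟨Nat.pos_of_ne_zero h, fun ℓ hℓ => hmin' ℓ ?_⟩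
        rcases eq_or_ne ℓ m' with rfl | hlj
        · omega
        · rw [h2 ℓ hlj]; exact hℓ
      cases ho : pick (σ i) c with
      | none =>
        -- all old capacities zero: only candidate i differs, then runs coincide
        have hall := (pick_eq_none_iff _ _).1 ho
        have hceq : dec c' (some m') = dec c none := by
          funext ℓ
          simp only [dec]
          rcases eq_or_ne ℓ m' with rfl | hlj
          · rw [Function.update_self]; omega
          · rw [Function.update_of_ne hlj]; exact h2 ℓ hlj
        have hsub : (Finset.univ.filter fun x => greedy σ (i::L) c x ≠ greedy σ (i::L) c' x)
            ⊆ {i} := by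
          intro x hx
          simp only [Finset.mem_filter, Finset.mem_univ, true_and, greedy, ho, hm'] at hx
          by_cases hxi : x = i
          · simp [hxi]
          · rw [if_neg hxi, if_neg hxi, hceq] at hx
            exact absurd rfl hx
        have hcard := Finset.card_le_card hsub
        simp only [Finset.card_singleton] at hcard
        omega
      | some m =>
        obtain ⟨hmpos, hmmin⟩ := (pick_eq_some_iff _ _ _).1 ho
        have hmj : m ≠ m' := fun h => by rw [h] at hmpos; omega
        have hsub : (Finset.univ.filter fun x => greedy σ (i::L) c x ≠ greedy σ (i::L) c' x)
            ⊆ insert i (Finset.univ.filter fun x =>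
              greedy σ L (dec c (some m)) x ≠ greedy σ L (dec c' (some m')) x) := by
          intro x hx
          simp only [Finset.mem_filter, Finset.mem_univ, true_and, greedy, ho, hm'] at hx
          by_cases hxi : x = i
          · subst hxi; exact Finset.mem_insert_self x _
          · rw [if_neg hxi, if_neg hxi] at hx
            exact Finset.mem_insert_of_mem
              (Finset.mem_filter.2 ⟨Finset.mem_univ _, hx⟩)
        have hrec := ih (dec c (some m)) (dec c' (some m')) m (insert m' R) ?_ ?_ ?_ ?_
        · have h4 : (insert m' R).card = R.card + 1 := Finset.card_insert_of_notMem hjR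
          have h5 := Finset.card_le_card hsub
          have h6 := Finset.card_insert_le i (Finset.univ.filter fun x =>
              greedy σ L (dec c (some m)) x ≠ greedy σ L (dec c' (some m')) x)
          rw [h4] at hrec
          omega
        · -- new difference at m
          simp only [dec]
          rw [Function.update_of_ne hmj, Function.update_self, h2 m hmj]
          omega
        · intro ℓ hℓ
          simp only [dec]
          rw [Function.update_of_ne hℓ]
          rcases eq_or_ne ℓ m' with rfl | hlj
          · rw [Function.update_self]; omega
          · rw [Function.update_of_ne hlj]; exact h2 ℓ hlj
        · intro ℓ hℓ
          simp only [dec]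
          rcases Finset.mem_insert.1 hℓ with rfl | hℓR
          · rw [Function.update_of_ne hmj.symm]; exact hcj0
          · have hc0 := hR ℓ hℓR
            rcases eq_or_ne ℓ m with rfl | hlm
            · rw [Function.update_self]; omega
            · rw [Function.update_of_ne hlm]; exact hc0
        · intro h
          rcases Finset.mem_insert.1 h with rfl | hmR
          · exact hmj rfl
          · have := hR m hmR; omega

/-! ### Chaining unit steps -/

lemma greedy_diff_chain {n p : ℕ} (σ : Fin n → Equiv.Perm (Fin p)) (L : List (Fin n)) :
    ∀ (N : ℕ) (k k' : Fin p → ℕ), (∑ ℓ : Fin p, ((k ℓ : ℤ) - (k' ℓ : ℤ)).natAbs) = N →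
      (Finset.univ.filter fun x => greedy σ L k x ≠ greedy σ L k' x).card ≤ p * N := by
  intro N
  induction N with
  | zero =>
    intro k k' hsum
    have hkk : k = k' := by
      funext ℓ
      have h0 : ((k ℓ : ℤ) - (k' ℓ : ℤ)).natAbs = 0 :=
        Finset.sum_eq_zero_iff.1 hsum ℓ (Finset.mem_univ ℓ)
      omega
    subst hkk
    simp
  | succ N ihN =>
    intro k k' hsum
    obtain ⟨j, hj⟩ : ∃ j, k j ≠ k' j := by
      by_contra h
      push_neg at h
      have hz : ∀ ℓ ∈ Finset.univ, ((k ℓ : ℤ) - (k' ℓ : ℤ)).natAbs = (0:ℕ) := by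
        intro ℓ _; rw [h ℓ]; simp
      rw [Finset.sum_congr rfl hz] at hsum
      simp at hsum
    set v : ℕ := if k j < k' j then k j + 1 else k j - 1 with hv
    set k₁ : Fin p → ℕ := Function.update k j v with hk₁
    have hk₁j : k₁ j = v := Function.update_self j v k
    have hk₁ne : ∀ ℓ, ℓ ≠ j → k₁ ℓ = k ℓ := fun ℓ hℓ => Function.update_of_ne hℓ v k
    have hstep : (Finset.univ.filter fun x => greedy σ L k x ≠ greedy σ L k₁ x).card ≤ p := by
      by_cases hlt : k j < k' j
      · have hu := greedy_diff_unit σ L k k₁ j ∅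
          (by rw [hk₁j, hv, if_pos hlt]) (fun ℓ hℓ => hk₁ne ℓ hℓ)
          (by simp) (by simp)
        simpa using hu
      · have hge : k' j < k j := by omega
        have heqset : (Finset.univ.filter fun x => greedy σ L k x ≠ greedy σ L k₁ x)
            = Finset.univ.filter fun x => greedy σ L k₁ x ≠ greedy σ L k x := by
          apply Finset.filter_congr
          intro x _
          exact ne_comm
        rw [heqset]
        have hu := greedy_diff_unit σ L k₁ k j ∅
          (by rw [hk₁j, hv, if_neg hlt]; omega) (fun ℓ hℓ => (hk₁ne ℓ hℓ).symm)
          (by simp) (by simp)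
        simpa using hu
    have hsum1 : (∑ ℓ : Fin p, ((k₁ ℓ : ℤ) - (k' ℓ : ℤ)).natAbs) = N := by
      have hsplit : ((k j : ℤ) - (k' j : ℤ)).natAbs
            + ∑ ℓ ∈ Finset.univ.erase j, ((k ℓ : ℤ) - (k' ℓ : ℤ)).natAbs
          = ∑ ℓ : Fin p, ((k ℓ : ℤ) - (k' ℓ : ℤ)).natAbs :=
        Finset.add_sum_erase Finset.univ
          (fun ℓ => ((k ℓ : ℤ) - (k' ℓ : ℤ)).natAbs) (Finset.mem_univ j)
      have hsplit1 : ((k₁ j : ℤ) - (k' j : ℤ)).natAbs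
            + ∑ ℓ ∈ Finset.univ.erase j, ((k₁ ℓ : ℤ) - (k' ℓ : ℤ)).natAbs
          = ∑ ℓ : Fin p, ((k₁ ℓ : ℤ) - (k' ℓ : ℤ)).natAbs :=
        Finset.add_sum_erase Finset.univ
          (fun ℓ => ((k₁ ℓ : ℤ) - (k' ℓ : ℤ)).natAbs) (Finset.mem_univ j)
      have hrest : ∑ ℓ ∈ Finset.univ.erase j, ((k₁ ℓ : ℤ) - (k' ℓ : ℤ)).natAbs
          = ∑ ℓ ∈ Finset.univ.erase j, ((k ℓ : ℤ) - (k' ℓ : ℤ)).natAbs := by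
        apply Finset.sum_congr rfl
        intro ℓ hℓ
        rw [hk₁ne ℓ (Finset.mem_erase.1 hℓ).1]
      have hjterm : ((k₁ j : ℤ) - (k' j : ℤ)).natAbs + 1 = ((k j : ℤ) - (k' j : ℤ)).natAbs := by
        rw [hk₁j, hv]
        split_ifs with h <;> omega
      rw [← hsplit] at hsum
      rw [← hsplit1, hrest]
      omega
    have hrec := ihN k₁ k' hsum1
    have hsub : (Finset.univ.filter fun x => greedy σ L k x ≠ greedy σ L k' x)
        ⊆ (Finset.univ.filter fun x => greedy σ L k x ≠ greedy σ L k₁ x)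
          ∪ (Finset.univ.filter fun x => greedy σ L k₁ x ≠ greedy σ L k' x) := by
      intro x hx
      simp only [Finset.mem_filter, Finset.mem_univ, true_and, Finset.mem_union] at hx ⊢
      by_contra h
      push_neg at h
      exact hx (h.1.trans h.2)
    have h7 := Finset.card_le_card hsub
    have h8 := Finset.card_union_le
      (Finset.univ.filter fun x => greedy σ L k x ≠ greedy σ L k₁ x)
      (Finset.univ.filter fun x => greedy σ L k₁ x ≠ greedy σ L k' x)
    have h9 : p * (N + 1) = p * N + p := by ring
    omega

/-! ### Stable assignments follow the greedy recursion -/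

lemma stable_eq_greedy_aux {n p : ℕ} (uhat : Fin n → ℝ)
    (σ : Fin n → Equiv.Perm (Fin p)) (k : Fin p → ℕ) (M : Fin n → Option (Fin p))
    (hM : IsStable uhat σ k M) :
    ∀ (L : List (Fin n)) (c : Fin p → ℕ),
      L.Pairwise (fun a b => uhat b < uhat a) →
      (∀ x y, x ∉ L → y ∈ L → uhat y < uhat x) →
      (∀ ℓ, c ℓ + ((assignedTo M ℓ).filter (fun x => x ∉ L)).card = k ℓ) →
      ∀ x ∈ L, M x = greedy σ L c x := by
  intro L
  induction L with
  | nil => intro c _ _ _ x hx; exact absurd hx List.not_mem_nil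
  | cons i L ih =>
    intro c hpair hout hcap x hx
    have hhead : ∀ b ∈ L, uhat b < uhat i := (List.pairwise_cons.1 hpair).1
    have hiL : i ∉ L := fun h => lt_irrefl _ (hhead i h)
    have herase : ∀ ℓ : Fin p, (assignedTo M ℓ).filter (fun x => x ∉ (i :: L))
        = ((assignedTo M ℓ).filter (fun x => x ∉ L)).erase i := by
      intro ℓ
      ext y
      simp only [Finset.mem_filter, Finset.mem_erase, List.mem_cons, not_or]
      tauto
    have hblock : ∀ ℓ : Fin p, 0 < c ℓ → M i ≠ some ℓ → Prefers (σ i) ℓ (M i) → False := by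
      intro ℓ hcℓ hne hpref
      apply hM.2 i ℓ
      refine ⟨hne, hpref, ?_⟩
      by_cases hfull : (assignedTo M ℓ).card < k ℓ
      · exact Or.inl hfull
      · right
        have hcapℓ := hcap ℓ
        have hFlt : ((assignedTo M ℓ).filter (fun x => x ∉ (i :: L))).card
            < (assignedTo M ℓ).card := by omega
        have hns : ¬ (assignedTo M ℓ ⊆ (assignedTo M ℓ).filter (fun x => x ∉ (i :: L))) :=
          fun hs => absurd (Finset.card_le_card hs) (by omega)
        obtain ⟨i', hi'A, hi'F⟩ := Finset.not_subset.1 hns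
        have hi'mem : i' ∈ (i :: L) := by
          by_contra hcon
          exact hi'F (Finset.mem_filter.2 ⟨hi'A, hcon⟩)
        have hi'ne : i' ≠ i := by
          intro h; subst h
          exact hne ((Finset.mem_filter.1 hi'A).2 ▸ rfl)
        have hi'L : i' ∈ L := by
          rcases List.mem_cons.1 hi'mem with h | h
          · exact absurd h hi'ne
          · exact h
        exact ⟨i', hi'A, hhead i' hi'L⟩
    have hMi : M i = pick (σ i) c := by
      cases hMi0 : M i with
      | none =>
        symm
        rw [pick_eq_none_iff]
        intro ℓ
        by_contra hc0
        exact hblock ℓ (Nat.pos_of_ne_zero hc0) (by rw [hMi0]; simp) (by rw [hMi0]; trivial)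
      | some ℓ₀ =>
        symm
        rw [pick_eq_some_iff]
        have hiA : i ∈ assignedTo M ℓ₀ := by
          simp only [assignedTo, Finset.mem_filter, Finset.mem_univ, true_and]
          exact hMi0
        constructor
        · have hcapℓ := hcap ℓ₀
          have hsubF : (assignedTo M ℓ₀).filter (fun x => x ∉ (i :: L))
              ⊆ (assignedTo M ℓ₀).erase i := by
            intro y hy
            have hy' := Finset.mem_filter.1 hy
            refine Finset.mem_erase.2 ⟨?_, hy'.1⟩
            intro h; subst h
            exact hy'.2 (List.mem_cons_self)
          have h1 := Finset.card_le_card hsubF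
          have h2 : ((assignedTo M ℓ₀).erase i).card = (assignedTo M ℓ₀).card - 1 :=
            Finset.card_erase_of_mem hiA
          have h3 : 0 < (assignedTo M ℓ₀).card := Finset.card_pos.2 ⟨i, hiA⟩
          have h4 := hM.1 ℓ₀
          omega
        · intro ℓ hcℓ
          by_contra hlt
          push_neg at hlt
          have hne : ℓ ≠ ℓ₀ := by
            intro h; subst h; exact lt_irrefl _ hlt
          exact hblock ℓ hcℓ (by rw [hMi0]; simp [Ne, (Option.some_injective _).ne_iff, hne.symm])
            (by rw [hMi0]; exact hlt)
    rcases List.mem_cons.1 hx with rfl | hxL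
    · simp only [greedy, if_pos rfl]
      exact hMi
    · have hxi : x ≠ i := by
        intro h; subst h; exact hiL hxL
      simp only [greedy, if_neg hxi]
      apply ih (dec c (pick (σ i) c)) (List.pairwise_cons.1 hpair).2 ?_ ?_ x hxL
      · intro a y ha hy
        by_cases hai : a = i
        · subst hai; exact hhead y hy
        · exact hout a y (by simp [List.mem_cons, hai, ha]) (List.mem_cons_of_mem i hy)
      · intro ℓ
        have hcapℓ := hcap ℓ
        rw [herase ℓ] at hcapℓ
        cases hMi0 : M i with
        | none =>
          rw [hMi0] at hMi
          rw [← hMi]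
          simp only [dec]
          have hiF : i ∉ (assignedTo M ℓ).filter (fun x => x ∉ L) := by
            intro h
            have hh := (Finset.mem_filter.1 h).1
            simp only [assignedTo, Finset.mem_filter, Finset.mem_univ, true_and] at hh
            rw [hMi0] at hh
            simp at hh
          rw [Finset.erase_eq_of_notMem hiF] at hcapℓ
          exact hcapℓ
        | some ℓ₀ =>
          rw [hMi0] at hMi
          rw [← hMi]
          simp only [dec]
          obtain ⟨hpos, -⟩ := (pick_eq_some_iff _ _ _).1 hMi.symm
          rcases eq_or_ne ℓ ℓ₀ with rfl | hne
          · rw [Function.update_self]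
            have hiF : i ∈ (assignedTo M ℓ).filter (fun x => x ∉ L) := by
              refine Finset.mem_filter.2 ⟨?_, hiL⟩
              simp only [assignedTo, Finset.mem_filter, Finset.mem_univ, true_and]
              exact hMi0
            have h5 := Finset.card_erase_of_mem hiF
            have hcard : 0 < ((assignedTo M ℓ).filter (fun x => x ∉ L)).card :=
              Finset.card_pos.2 ⟨i, hiF⟩
            omega
          · rw [Function.update_of_ne hne]
            have hiF : i ∉ (assignedTo M ℓ).filter (fun x => x ∉ L) := by
              intro h
              have hh := (Finset.mem_filter.1 h).1
              simp only [assignedTo, Finset.mem_filter, Finset.mem_univ, true_and] at hh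
              rw [hMi0] at hh
              exact hne (Option.some_injective _ hh.symm)
            rw [Finset.erase_eq_of_notMem hiF] at hcapℓ
            exact hcapℓ

/-! ### The sorted list of candidates -/

lemma exists_sorted_list {n : ℕ} (uhat : Fin n → ℝ) (hu : Function.Injective uhat) :
    ∃ L : List (Fin n), (∀ x, x ∈ L) ∧ L.Pairwise (fun a b => uhat b < uhat a) := by
  classical
  letI r : Fin n → Fin n → Prop := fun a b => uhat b ≤ uhat a
  haveI : DecidableRel r := fun a b => inferInstanceAs (Decidable (uhat b ≤ uhat a))
  haveI : IsTrans (Fin n) r := ⟨fun a b c hab hbc => le_trans hbc hab⟩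
  haveI : Std.Antisymm r := ⟨fun a b hab hba => hu (le_antisymm hba hab)⟩
  haveI : Std.Total r := ⟨fun a b => le_total (uhat b) (uhat a)⟩
  refine ⟨Finset.univ.sort r, fun x => (Finset.mem_sort r).2 (Finset.mem_univ x), ?_⟩
  have hs : (Finset.univ.sort r).Pairwise r := Finset.pairwise_sort _ r
  have hn : (Finset.univ.sort r).Pairwise (· ≠ ·) := Finset.sort_nodup _ r
  exact (hs.and hn).imp (fun {a b} h => lt_of_le_of_ne h.1 (fun he => h.2 ((hu he).symm)))

/-- If two instances share the utilities and preferences and have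
capacity vectors `k` and `k'` with total coordinatewise difference `D`, then the stable
assignments differ on at most `p * D` candidates. -/
theorem stable_lipschitz_in_capacities
    (n p : ℕ) (hp : 1 ≤ p)
    (uhat : Fin n → ℝ) (huhat : Function.Injective uhat)
    (σ : Fin n → Equiv.Perm (Fin p))
    (k k' : Fin p → ℕ)
    (M M' : Fin n → Option (Fin p))
    (hM : IsStable uhat σ k M) (hM' : IsStable uhat σ k' M') :
    (Finset.univ.filter fun i => M i ≠ M' i).card
      ≤ p * ∑ ℓ : Fin p, ((k ℓ : ℤ) - (k' ℓ : ℤ)).natAbs := by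
  obtain ⟨L, hLmem, hLpair⟩ := exists_sorted_list uhat huhat
  have hcap0 : ∀ (N : Fin n → Option (Fin p)) (c : Fin p → ℕ),
      ∀ ℓ, c ℓ + ((assignedTo N ℓ).filter (fun x => x ∉ L)).card = c ℓ := by
    intro N c ℓ
    have hempty : (assignedTo N ℓ).filter (fun x => x ∉ L) = ∅ := by
      apply Finset.filter_eq_empty_iff.2
      intro x _
      simp [hLmem x]
    rw [hempty]
    simp
  have hMg : ∀ x, M x = greedy σ L k x := fun x =>
    stable_eq_greedy_aux uhat σ k M hM L k hLpair
      (fun a y ha _ => absurd (hLmem a) ha) (hcap0 M k) x (hLmem x)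
  have hM'g : ∀ x, M' x = greedy σ L k' x := fun x =>
    stable_eq_greedy_aux uhat σ k' M' hM' L k' hLpair
      (fun a y ha _ => absurd (hLmem a) ha) (hcap0 M' k') x (hLmem x)
  have hfe : (Finset.univ.filter fun i => M i ≠ M' i)
      = Finset.univ.filter fun i => greedy σ L k i ≠ greedy σ L k' i := by
    apply Finset.filter_congr
    intro x _
    rw [hMg x, hM'g x]
  rw [hfe]
  exact greedy_diff_chain σ L _ k k' rfl
end

section
/- Fix n distinct observed utilities û and capacities with K := k_1+⋯+k_p ≤ n, and let the preference orders σ_1,…,σ_n be i.i.d. from an arbitrary distribution L on strict orders of the p institutions; let M be the unique stable assignment. Let A be the set of the g candidates with the highest observed utilities and B the set of the next m candidates in decreasing order of observed utility (so every candidate of A has larger observed utility than every candidate of B). Then E[π_A(M)]/g ≥ E[π_B(M)]/m, where π_G(M) is the number of candidates in G assigned by M to their top-choice institution. -/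
open MeasureTheory Finset

/-- Candidate `i` is assigned by `M` to the top institution of its preference order. -/
def TopChoice {n p : ℕ} (σ : Fin n → Equiv.Perm (Fin p)) (M : Fin n → Option (Fin p))
    (i : Fin n) : Prop :=
  ∃ j, M i = some j ∧ ∀ j', σ i j ≤ σ i j'

open scoped Classical in
/-- The number of candidates in `G` assigned by `M` to their top-choice institution. -/
noncomputable def assignedTop {n p : ℕ} (σ : Fin n → Equiv.Perm (Fin p))
    (M : Fin n → Option (Fin p)) (G : Finset (Fin n)) : ℕ :=
  (G.filter fun i => TopChoice σ M i).card

/-- Preference orders form a finite type; we endow it with the discrete σ-algebra. -/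
instance {p : ℕ} : MeasurableSpace (Equiv.Perm (Fin p)) := ⊤
/-- The set of the `K` candidates with the largest values of `x` (assuming the values of
`x` are pairwise distinct): `i` belongs to `topK K x` iff at most `K` candidates `j`
(including `i` itself) satisfy `x i ≤ x j`. -/
noncomputable def topK {n : ℕ} (K : ℕ) (x : Fin n → ℝ) : Finset (Fin n) :=
  Finset.univ.filter fun i => (Finset.univ.filter fun j => x i ≤ x j).card ≤ K

open ProbabilityTheory

/-! ### Serial dictatorship -/

open scoped Classical

section SD

variable {n p : ℕ} (uhat : Fin n → ℝ) (k : Fin p → ℕ)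

/-- The set of candidates with strictly larger observed utility than `i`. -/
noncomputable def above (i : Fin n) : Finset (Fin n) :=
  Finset.univ.filter fun i' => uhat i < uhat i'

lemma mem_above {i i' : Fin n} : i' ∈ above uhat i ↔ uhat i < uhat i' := by
  simp [above]

lemma above_card_lt {i i' : Fin n} (h : i' ∈ above uhat i) :
    (above uhat i').card < (above uhat i).card := by
  apply Finset.card_lt_card
  constructor
  · intro x hx
    rw [mem_above] at hx ⊢
    exact lt_trans ((mem_above uhat).1 h) hx
  · intro hsub
    have := hsub h
    rw [mem_above] at this
    exact lt_irrefl _ this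

/-- Serial dictatorship: each candidate, in decreasing order of observed utility, is
assigned to its most preferred institution with remaining capacity (if any). -/
noncomputable def SD (σ : Fin n → Equiv.Perm (Fin p)) (i : Fin n) : Option (Fin p) :=
  let A : Finset (Fin p) := Finset.univ.filter fun j =>
    ((above uhat i).attach.filter fun i' => SD σ i'.1 = some j).card < k j
  if h : A.Nonempty then some ((σ i).symm ((A.image (σ i)).min' (h.image _))) else none
termination_by (above uhat i).card
decreasing_by all_goals first | exact above_card_lt uhat a.2 | exact above_card_lt uhat i'.2

/-- Number of candidates of `S` assigned to `j` by serial dictatorship. -/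
noncomputable def cnt (σ : Fin n → Equiv.Perm (Fin p)) (S : Finset (Fin n)) (j : Fin p) : ℕ :=
  (S.attach.filter fun i' => SD uhat k σ i'.1 = some j).card

lemma cnt_eq (σ : Fin n → Equiv.Perm (Fin p)) (S : Finset (Fin n)) (j : Fin p) :
    cnt uhat k σ S j = (S.filter fun i' => SD uhat k σ i' = some j).card := by
  rw [cnt]
  refine Finset.card_bij (fun a _ => a.1) ?_ ?_ ?_
  · intro a ha
    rw [Finset.mem_filter] at ha ⊢
    exact ⟨a.2, ha.2⟩
  · intro a _ b _ hab
    exact Subtype.ext hab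
  · intro x hx
    rw [Finset.mem_filter] at hx
    exact ⟨⟨x, hx.1⟩, Finset.mem_filter.2 ⟨Finset.mem_attach _ _, hx.2⟩, rfl⟩

/-- Institutions with remaining capacity when it is `i`'s turn. -/
noncomputable def avSet (σ : Fin n → Equiv.Perm (Fin p)) (i : Fin n) : Finset (Fin p) :=
  Finset.univ.filter fun j => cnt uhat k σ (above uhat i) j < k j

lemma mem_avSet {σ : Fin n → Equiv.Perm (Fin p)} {i : Fin n} {j : Fin p} :
    j ∈ avSet uhat k σ i ↔ cnt uhat k σ (above uhat i) j < k j := by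
  simp [avSet]

lemma SD_eq (σ : Fin n → Equiv.Perm (Fin p)) (i : Fin n) :
    SD uhat k σ i =
      if h : (avSet uhat k σ i).Nonempty then
        some ((σ i).symm (((avSet uhat k σ i).image (σ i)).min' (h.image _)))
      else none := by
  rw [SD]
  rfl

end SD

section SD2

variable {n p : ℕ} (uhat : Fin n → ℝ) (k : Fin p → ℕ)

lemma SD_none {σ : Fin n → Equiv.Perm (Fin p)} {i : Fin n}
    (h : ¬ (avSet uhat k σ i).Nonempty) : SD uhat k σ i = none := by
  rw [SD_eq, dif_neg h]

lemma SD_some_mem {σ : Fin n → Equiv.Perm (Fin p)} {i : Fin n} {j : Fin p}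
    (h : SD uhat k σ i = some j) :
    j ∈ avSet uhat k σ i ∧ ∀ j' ∈ avSet uhat k σ i, σ i j ≤ σ i j' := by
  rw [SD_eq] at h
  by_cases hne : (avSet uhat k σ i).Nonempty
  · rw [dif_pos hne] at h
    have hj := Option.some.inj h
    have hv : ((avSet uhat k σ i).image (σ i)).min' (hne.image _) ∈
        (avSet uhat k σ i).image (σ i) := Finset.min'_mem _ _
    obtain ⟨a, ha, hav⟩ := Finset.mem_image.1 hv
    have hja : j = a := by rw [← hj, ← hav, Equiv.symm_apply_apply]
    subst hja
    refine ⟨ha, fun j' hj' => ?_⟩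
    rw [hav]
    exact Finset.min'_le _ _ (Finset.mem_image_of_mem _ hj')
  · rw [dif_neg hne] at h
    cases h

lemma SD_eq_some {σ : Fin n → Equiv.Perm (Fin p)} {i : Fin n} {j : Fin p}
    (hj : j ∈ avSet uhat k σ i) (hmin : ∀ j' ∈ avSet uhat k σ i, σ i j ≤ σ i j') :
    SD uhat k σ i = some j := by
  have hne : (avSet uhat k σ i).Nonempty := ⟨j, hj⟩
  rw [SD_eq, dif_pos hne]
  have hmin' : ((avSet uhat k σ i).image (σ i)).min' (hne.image _) = σ i j := by
    apply le_antisymm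
    · exact Finset.min'_le _ _ (Finset.mem_image_of_mem _ hj)
    · apply Finset.le_min'
      intro y hy
      obtain ⟨a, ha, rfl⟩ := Finset.mem_image.1 hy
      exact hmin a ha
  rw [hmin', Equiv.symm_apply_apply]

lemma SD_congr {σ σ' : Fin n → Equiv.Perm (Fin p)} :
    ∀ (N : ℕ) (i : Fin n), (above uhat i).card < N →
      (∀ i', uhat i ≤ uhat i' → σ i' = σ' i') → SD uhat k σ i = SD uhat k σ' i := by
  intro N
  induction N with
  | zero => intro i h; omega
  | succ N ih =>
    intro i hc hag
    have key : ∀ i' ∈ above uhat i, SD uhat k σ i' = SD uhat k σ' i' := by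
      intro i' hi'
      refine ih i' ?_ ?_
      · have := above_card_lt uhat hi'; omega
      · intro i'' h''
        exact hag i'' (le_of_lt (lt_of_lt_of_le ((mem_above uhat).1 hi') h''))
    have hav : avSet uhat k σ i = avSet uhat k σ' i := by
      unfold avSet
      apply Finset.filter_congr
      intro j _
      rw [cnt_eq, cnt_eq, Finset.filter_congr (fun x hx => by rw [key x hx])]
    rw [SD_eq, SD_eq, hag i le_rfl, hav]

variable (hp : 1 ≤ p)

/-- The top institution of a preference order. -/
def topOf (e : Equiv.Perm (Fin p)) : Fin p := e.symm ⟨0, hp⟩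

lemma topOf_min (e : Equiv.Perm (Fin p)) (j : Fin p) : e (topOf hp e) ≤ e j := by
  rw [topOf, Equiv.apply_symm_apply]
  exact Fin.mk_le_of_le_val (Nat.zero_le _)

lemma topChoice_iff (σ : Fin n → Equiv.Perm (Fin p)) (i : Fin n) :
    TopChoice σ (SD uhat k σ) i ↔ topOf hp (σ i) ∈ avSet uhat k σ i := by
  constructor
  · rintro ⟨j, hj, hmin⟩
    have h1 := SD_some_mem uhat k hj
    have hje : j = topOf hp (σ i) := by
      apply (σ i).injective
      exact le_antisymm (hmin _) (topOf_min hp (σ i) j)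
    rw [← hje]
    exact h1.1
  · intro hmem
    exact ⟨topOf hp (σ i),
      SD_eq_some uhat k hmem (fun j' _ => topOf_min hp (σ i) j'), topOf_min hp (σ i)⟩

lemma stable_eq_SD_aux (huhat : Function.Injective uhat)
    {σ : Fin n → Equiv.Perm (Fin p)} {M : Fin n → Option (Fin p)}
    (hst : IsStable uhat σ k M) :
    ∀ (N : ℕ) (i : Fin n), (above uhat i).card < N → M i = SD uhat k σ i := by
  intro N
  induction N with
  | zero => intro i h; omega
  | succ N ih =>
    intro i hc
    have key : ∀ i' ∈ above uhat i, M i' = SD uhat k σ i' := by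
      intro i' hi'
      refine ih i' ?_
      have := above_card_lt uhat hi'; omega
    have hcnt : ∀ j, ((above uhat i).filter fun i' => M i' = some j)
        = ((above uhat i).filter fun i' => SD uhat k σ i' = some j) :=
      fun j => Finset.filter_congr (fun x hx => by rw [key x hx])
    have hmemAv : ∀ j'', M i = some j'' → j'' ∈ avSet uhat k σ i := by
      intro j'' hj''
      rw [mem_avSet, cnt_eq, ← hcnt j'']
      have hnotin : i ∉ (above uhat i).filter fun i' => M i' = some j'' := by
        intro hmem
        have := (mem_above uhat).1 (Finset.mem_filter.1 hmem).1
        exact lt_irrefl _ this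
      have hsub : insert i ((above uhat i).filter fun i' => M i' = some j'')
          ⊆ assignedTo M j'' := by
        intro x hx
        rcases Finset.mem_insert.1 hx with rfl | hx'
        · simp [assignedTo, hj'']
        · simp [assignedTo, (Finset.mem_filter.1 hx').2]
      have hcard := Finset.card_le_card hsub
      rw [Finset.card_insert_of_notMem hnotin] at hcard
      have hcap := hst.1 j''
      omega
    have hblock : ∀ j ∈ avSet uhat k σ i, M i ≠ some j → Prefers (σ i) j (M i) → False := by
      intro j hjav hne hpref
      refine hst.2 i j ⟨hne, hpref, ?_⟩
      by_cases hex : ∃ i' ∈ assignedTo M j, uhat i' < uhat i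
      · exact Or.inr hex
      · push_neg at hex
        left
        have hsub : assignedTo M j ⊆ (above uhat i).filter fun i' => M i' = some j := by
          intro x hx
          have hxj : M x = some j := by simpa [assignedTo] using hx
          have hle : uhat i ≤ uhat x := hex x hx
          have hxi : x ≠ i := by rintro rfl; exact hne hxj
          refine Finset.mem_filter.2 ⟨(mem_above uhat).2 ?_, hxj⟩
          exact lt_of_le_of_ne hle (fun h => hxi (huhat h.symm))
        refine lt_of_le_of_lt (Finset.card_le_card hsub) ?_
        rw [hcnt j, ← cnt_eq]
        exact (mem_avSet uhat k).1 hjav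
    by_cases hne : (avSet uhat k σ i).Nonempty
    · have hSD : ∃ j0, SD uhat k σ i = some j0 := by
        rw [SD_eq, dif_pos hne]; exact ⟨_, rfl⟩
      obtain ⟨j0, hj0⟩ := hSD
      obtain ⟨hj0av, hj0min⟩ := SD_some_mem uhat k hj0
      rw [hj0]
      cases hMi : M i with
      | none =>
        exfalso
        apply hblock j0 hj0av
        · rw [hMi]; simp
        · rw [hMi]; exact trivial
      | some j'' =>
        have hj''av := hmemAv j'' hMi
        by_cases hjj : j'' = j0
        · rw [hjj]
        · exfalso
          apply hblock j0 hj0av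
          · rw [hMi]
            intro hcon
            exact hjj (Option.some.inj hcon)
          · rw [hMi]
            show σ i j0 < σ i j''
            exact lt_of_le_of_ne (hj0min j'' hj''av)
              (fun h => hjj ((σ i).injective h).symm)
    · rw [SD_none uhat k hne]
      cases hMi : M i with
      | none => rfl
      | some j'' => exact absurd (hmemAv j'' hMi) (fun h => hne ⟨j'', h⟩)

lemma stable_eq_SD (huhat : Function.Injective uhat)
    {σ : Fin n → Equiv.Perm (Fin p)} {M : Fin n → Option (Fin p)}
    (hst : IsStable uhat σ k M) : M = SD uhat k σ :=
  funext fun i => stable_eq_SD_aux uhat k huhat hst ((above uhat i).card + 1) i (lt_add_one _)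

lemma top_swap (hp : 1 ≤ p) {i i2 : Fin n} (h12 : uhat i2 < uhat i) (c : Fin n → Equiv.Perm (Fin p))
    (h : TopChoice c (SD uhat k c) i2) :
    TopChoice (c ∘ Equiv.swap i i2) (SD uhat k (c ∘ Equiv.swap i i2)) i := by
  rw [topChoice_iff uhat k hp] at h ⊢
  have hci : (c ∘ Equiv.swap i i2) i = c i2 := by simp
  rw [hci]
  rw [mem_avSet, cnt_eq] at h ⊢
  have hloc : ∀ i' ∈ above uhat i, SD uhat k (c ∘ Equiv.swap i i2) i' = SD uhat k c i' := by
    intro i' hi'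
    apply SD_congr uhat k ((above uhat i').card + 1) i' (lt_add_one _)
    intro i'' h''
    have h1 : uhat i < uhat i'' := lt_of_lt_of_le ((mem_above uhat).1 hi') h''
    have hni : i'' ≠ i := by rintro rfl; exact lt_irrefl _ h1
    have hni2 : i'' ≠ i2 := by rintro rfl; exact lt_asymm h12 h1
    simp [Equiv.swap_apply_of_ne_of_ne hni hni2]
  rw [Finset.filter_congr (fun x hx => by rw [hloc x hx])]
  refine lt_of_le_of_lt (Finset.card_le_card ?_) h
  apply Finset.filter_subset_filter
  intro x hx
  rw [mem_above] at hx ⊢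
  exact lt_trans h12 hx

end SD2

section Rank

variable {n : ℕ} (uhat : Fin n → ℝ)

/-- 1-indexed rank from the top. -/
noncomputable def rnk (i : Fin n) : ℕ :=
  (Finset.univ.filter fun j => uhat i ≤ uhat j).card

lemma mem_topK {K : ℕ} {i : Fin n} : i ∈ topK K uhat ↔ rnk uhat i ≤ K := by
  simp [topK, rnk]

lemma rnk_pos (i : Fin n) : 0 < rnk uhat i :=
  Finset.card_pos.2 ⟨i, by simp [le_refl]⟩

lemma rnk_le (i : Fin n) : rnk uhat i ≤ n := by
  have := Finset.card_filter_le (Finset.univ : Finset (Fin n)) fun j => uhat i ≤ uhat j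
  simpa [rnk] using this

lemma rnk_lt_rnk {i i' : Fin n} (h : uhat i < uhat i') : rnk uhat i' < rnk uhat i := by
  apply Finset.card_lt_card
  constructor
  · intro x hx
    rw [Finset.mem_filter] at hx ⊢
    exact ⟨hx.1, le_trans (le_of_lt h) hx.2⟩
  · intro hsub
    have hi : i ∈ Finset.univ.filter fun j => uhat i ≤ uhat j := by simp
    have := Finset.mem_filter.1 (hsub hi)
    exact absurd this.2 (not_le.2 h)

lemma lt_of_rnk_lt (huhat : Function.Injective uhat) {i i' : Fin n}
    (h : rnk uhat i' < rnk uhat i) : uhat i < uhat i' := by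
  rcases lt_trichotomy (uhat i) (uhat i') with h1 | h1 | h1
  · exact h1
  · exact absurd (huhat h1) (fun e => by subst e; exact lt_irrefl _ h)
  · exact absurd (rnk_lt_rnk uhat h1) (by omega)

lemma card_topK (huhat : Function.Injective uhat) {K : ℕ} (hKn : K ≤ n) :
    (topK K uhat).card = K := by
  have hrinj : Function.Injective (rnk uhat) := by
    intro a b hab
    by_contra hne
    rcases lt_trichotomy (uhat a) (uhat b) with h1 | h1 | h1
    · have := rnk_lt_rnk uhat h1; omega
    · exact hne (huhat h1)
    · have := rnk_lt_rnk uhat h1; omega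
  set e : Fin n → Fin n := fun i => ⟨rnk uhat i - 1, by
    have h1 := rnk_pos uhat i
    have h2 := rnk_le uhat i
    omega⟩ with he
  have heinj : Function.Injective e := by
    intro a b hab
    apply hrinj
    have h1 := rnk_pos uhat a
    have h2 := rnk_pos uhat b
    have := Fin.mk.injEq (rnk uhat a - 1) _ (rnk uhat b - 1) _ ▸ hab
    have h3 : rnk uhat a - 1 = rnk uhat b - 1 := by
      simpa [he] using congrArg Fin.val hab
    omega
  have hesurj : Function.Surjective e := Finite.surjective_of_injective heinj
  have htarget : (Finset.univ.filter fun v : Fin n => (v : ℕ) < K).card = K := by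
    have : (Finset.univ.filter fun v : Fin n => (v : ℕ) < K)
        = (Finset.univ : Finset (Fin K)).map (Fin.castLEEmb hKn) := by
      ext v
      simp only [Finset.mem_filter, Finset.mem_univ, true_and, Finset.mem_map]
      constructor
      · intro hv
        refine ⟨⟨(v : ℕ), hv⟩, ?_⟩
        simp [Fin.castLEEmb, Fin.ext_iff]
      · rintro ⟨w, rfl⟩
        simp [Fin.castLEEmb]
    rw [this, Finset.card_map, Finset.card_univ, Fintype.card_fin]
  rw [← htarget]
  apply Finset.card_bij (fun i _ => e i)
  · intro a ha
    rw [mem_topK] at ha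
    have h1 := rnk_pos uhat a
    simp only [Finset.mem_filter, Finset.mem_univ, true_and, he]
    omega
  · intro a _ b _ hab
    exact heinj hab
  · intro v hv
    simp only [Finset.mem_filter, Finset.mem_univ, true_and] at hv
    obtain ⟨i, rfl⟩ := hesurj v
    refine ⟨i, ?_, rfl⟩
    rw [mem_topK]
    have h1 := rnk_pos uhat i
    simp only [he] at hv
    omega

end Rank

section Pmono

variable {n p : ℕ} (uhat : Fin n → ℝ) (k : Fin p → ℕ)

lemma P_mono (hp : 1 ≤ p) {i i2 : Fin n} (h12 : uhat i2 < uhat i)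
    (w : (Fin n → Equiv.Perm (Fin p)) → ℝ) (hw0 : ∀ c, 0 ≤ w c)
    (hwswap : ∀ c, w (c ∘ Equiv.swap i i2) = w c) :
    ∑ c : Fin n → Equiv.Perm (Fin p),
        w c * (if TopChoice c (SD uhat k c) i2 then (1 : ℝ) else 0)
      ≤ ∑ c : Fin n → Equiv.Perm (Fin p),
          w c * (if TopChoice c (SD uhat k c) i then (1 : ℝ) else 0) := by
  have step1 : ∀ c : Fin n → Equiv.Perm (Fin p),
      w c * (if TopChoice c (SD uhat k c) i2 then (1 : ℝ) else 0)
        ≤ w c * (if TopChoice (c ∘ Equiv.swap i i2) (SD uhat k (c ∘ Equiv.swap i i2)) i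
            then (1 : ℝ) else 0) := by
    intro c
    apply mul_le_mul_of_nonneg_left _ (hw0 c)
    split_ifs with h1 h2
    · exact le_refl _
    · exact absurd (top_swap uhat k hp h12 c h1) h2
    · norm_num
    · exact le_refl _
  refine le_trans (Finset.sum_le_sum fun c _ => step1 c) (le_of_eq ?_)
  have hinv : Function.Involutive (fun c : Fin n → Equiv.Perm (Fin p) => c ∘ Equiv.swap i i2) := by
    intro c
    funext x
    simp [Function.comp, Equiv.swap_apply_self]
  refine Fintype.sum_bijective _ hinv.bijective _ _ ?_
  intro c
  rw [hwswap c]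

end Pmono

instance {p : ℕ} : MeasurableSingletonClass (Equiv.Perm (Fin p)) :=
  ⟨fun _ => MeasurableSpace.measurableSet_top⟩


/-- With fixed distinct observed utilities, capacities `K ≤ n`, and
preference orders i.i.d. from an arbitrary distribution `L`, let `M` be the unique
stable assignment, `A` the set of the `g` candidates with the highest observed utilities
and `B` the set of the next `m` candidates. Then
`E[π_A(M)]/g ≥ E[π_B(M)]/m`. -/
theorem expected_top_choice_rate_monotone
    (n p K : ℕ) (hp : 1 ≤ p)
    (k : Fin p → ℕ) (hK : ∑ ℓ, k ℓ = K) (hKn : K ≤ n)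
    (uhat : Fin n → ℝ) (huhat : Function.Injective uhat)
    (g m : ℕ) (hg : 0 < g) (hm : 0 < m) (hgm : g + m ≤ n)
    (Ω : Type) [MeasurableSpace Ω] (μ : Measure Ω) [IsProbabilityMeasure μ]
    (L : Measure (Equiv.Perm (Fin p))) [IsProbabilityMeasure L]
    (σ : Fin n → Ω → Equiv.Perm (Fin p))
    (hindep : iIndepFun σ μ)
    (hlaw : ∀ i, Measure.map (σ i) μ = L)
    (M : Ω → Fin n → Option (Fin p))
    (hM : ∀ ω, IsStable uhat (fun i => σ i ω) k (M ω)) :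
    (∫ ω, (assignedTop (fun i => σ i ω) (M ω) (topK g uhat) : ℝ) ∂μ) / g
      ≥ (∫ ω, (assignedTop (fun i => σ i ω) (M ω)
            (topK (g + m) uhat \ topK g uhat) : ℝ) ∂μ) / m := by
  -- measurability preliminaries
  have hσae : ∀ x, AEMeasurable (σ x) μ := by
    intro x
    by_contra hnm
    have h0 : Measure.map (σ x) μ = 0 := Measure.map_of_not_aemeasurable hnm
    rw [hlaw x] at h0
    have h1 : L Set.univ = 1 := measure_univ
    rw [h0] at h1
    simp at h1
  set σ' : Fin n → Ω → Equiv.Perm (Fin p) := fun x => (hσae x).mk (σ x) with hσ'def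
  have hτ' : Measurable (fun ω x => σ' x ω) :=
    measurable_pi_lambda _ fun x => (hσae x).measurable_mk
  have hae : ∀ᵐ ω ∂μ, ∀ x, σ x ω = σ' x ω :=
    MeasureTheory.ae_all_iff.2 fun x => (hσae x).ae_eq_mk
  -- the weight of a preference profile
  set w : (Fin n → Equiv.Perm (Fin p)) → ℝ := fun c => (∏ x, L {c x}).toReal with hwdef
  have hw0 : ∀ c, 0 ≤ w c := fun c => ENNReal.toReal_nonneg
  have hpre : ∀ c : Fin n → Equiv.Perm (Fin p),
      μ ((fun ω => fun x => σ x ω) ⁻¹' {c}) = ∏ x, L {c x} := by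
    intro c
    have hset : ((fun ω => fun x => σ x ω) ⁻¹' {c} : Set Ω)
        = ⋂ x ∈ (Finset.univ : Finset (Fin n)), σ x ⁻¹' {c x} := by
      ext ω
      simp [funext_iff]
    rw [hset,
      (iIndepFun_iff_measure_inter_preimage_eq_mul.1 hindep) Finset.univ
        (sets := fun x => {c x}) (fun x _ => MeasurableSpace.measurableSet_top)]
    refine Finset.prod_congr rfl fun x _ => ?_
    rw [← hlaw x, Measure.map_apply_of_aemeasurable (hσae x) MeasurableSpace.measurableSet_top]
  have hmap : ∀ c : Fin n → Equiv.Perm (Fin p),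
      (μ.map (fun ω x => σ' x ω)) {c} = ∏ x, L {c x} := by
    intro c
    rw [Measure.map_apply hτ' (measurableSet_singleton c)]
    have hsets : ((fun ω x => σ' x ω) ⁻¹' {c} : Set Ω)
        =ᵐ[μ] ((fun ω x => σ x ω) ⁻¹' {c} : Set Ω) := by
      refine hae.mono fun ω h => ?_
      have hfe : (fun x => σ' x ω) = fun x => σ x ω := funext fun x => (h x).symm
      simp only [Set.preimage, Set.mem_singleton_iff, Set.mem_setOf_eq, eq_iff_iff]
      exact iff_of_eq (congrArg (· = c) hfe)
    rw [measure_congr hsets, hpre c]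
  -- integrals reduce to finite sums
  have hint : ∀ F : (Fin n → Equiv.Perm (Fin p)) → ℝ,
      ∫ ω, F (fun x => σ x ω) ∂μ = ∑ c, w c * F c := by
    intro F
    have h1 : ∫ ω, F (fun x => σ x ω) ∂μ = ∫ ω, F (fun x => σ' x ω) ∂μ := by
      refine integral_congr_ae (hae.mono fun ω h => ?_)
      show F (fun x => σ x ω) = F (fun x => σ' x ω)
      exact congrArg F (funext h)
    have h2 : ∫ ω, F (fun x => σ' x ω) ∂μ = ∫ c, F c ∂(μ.map (fun ω x => σ' x ω)) :=
      (integral_map hτ'.aemeasurable (measurable_of_countable F).aestronglyMeasurable).symm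
    haveI : IsProbabilityMeasure (μ.map (fun ω x => σ' x ω)) :=
      Measure.isProbabilityMeasure_map hτ'.aemeasurable
    have h3 : ∫ c, F c ∂(μ.map (fun ω x => σ' x ω))
        = ∑ c, ((μ.map (fun ω x => σ' x ω)) {c}).toReal • F c :=
      integral_fintype (Integrable.of_finite)
    rw [h1, h2, h3]
    exact Finset.sum_congr rfl fun c _ => by rw [hmap c, smul_eq_mul]
  -- the unique stable assignment is serial dictatorship
  have hMSD : ∀ ω, M ω = SD uhat k (fun x => σ x ω) := fun ω =>
    stable_eq_SD uhat k huhat (hM ω)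
  -- per-candidate success probabilities
  set P : Fin n → ℝ := fun i =>
    ∑ c : Fin n → Equiv.Perm (Fin p),
      w c * (if TopChoice c (SD uhat k c) i then (1 : ℝ) else 0) with hPdef
  have hintegral : ∀ G : Finset (Fin n),
      ∫ ω, (assignedTop (fun i => σ i ω) (M ω) G : ℝ) ∂μ = ∑ i ∈ G, P i := by
    intro G
    have hstep : ∫ ω, (assignedTop (fun i => σ i ω) (M ω) G : ℝ) ∂μ
        = ∑ c : Fin n → Equiv.Perm (Fin p),
            w c * ((assignedTop c (SD uhat k c) G : ℕ) : ℝ) := by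
      rw [← hint (fun c => ((assignedTop c (SD uhat k c) G : ℕ) : ℝ))]
      refine integral_congr_ae (Filter.Eventually.of_forall fun ω => ?_)
      show (assignedTop (fun i => σ i ω) (M ω) G : ℝ)
        = ((assignedTop (fun x => σ x ω) (SD uhat k fun x => σ x ω) G : ℕ) : ℝ)
      rw [hMSD ω]
    rw [hstep]
    have hcard : ∀ c : Fin n → Equiv.Perm (Fin p),
        ((assignedTop c (SD uhat k c) G : ℕ) : ℝ)
          = ∑ i ∈ G, (if TopChoice c (SD uhat k c) i then (1 : ℝ) else 0) := by
      intro c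
      simp only [assignedTop]
      rw [Finset.card_filter]
      push_cast
      rfl
    simp only [hcard, Finset.mul_sum]
    rw [Finset.sum_comm]
  -- ordering and cardinalities of the two groups
  have horder : ∀ i ∈ topK g uhat, ∀ i2 ∈ topK (g + m) uhat \ topK g uhat,
      uhat i2 < uhat i := by
    intro i hi i2 hi2
    rw [mem_topK] at hi
    obtain ⟨hi2a, hi2b⟩ := Finset.mem_sdiff.1 hi2
    rw [mem_topK] at hi2b
    exact lt_of_rnk_lt uhat huhat (by omega)
  have hgn : g ≤ n := by omega
  have hA : (topK g uhat).card = g := card_topK uhat huhat hgn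
  have hsubK : topK g uhat ⊆ topK (g + m) uhat := fun i hi =>
    (mem_topK uhat).2 (le_trans ((mem_topK uhat).1 hi) (by omega))
  have hB : (topK (g + m) uhat \ topK g uhat).card = m := by
    rw [Finset.card_sdiff_of_subset hsubK, card_topK uhat huhat hgm, hA]
    omega
  -- monotonicity of success probabilities
  have hPm : ∀ i ∈ topK g uhat, ∀ i2 ∈ topK (g + m) uhat \ topK g uhat, P i2 ≤ P i := by
    intro i hi i2 hi2
    refine P_mono uhat k hp (horder i hi i2 hi2) w hw0 ?_
    intro c
    show (∏ x, L {(c ∘ Equiv.swap i i2) x}).toReal = (∏ x, L {c x}).toReal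
    congr 1
    exact Equiv.prod_comp (Equiv.swap i i2) fun x => L {c x}
  -- conclusion
  rw [ge_iff_le, hintegral, hintegral,
    div_le_div_iff₀ (by exact_mod_cast hm) (by exact_mod_cast hg)]
  calc (∑ i2 ∈ topK (g + m) uhat \ topK g uhat, P i2) * (g : ℝ)
      = ∑ i2 ∈ topK (g + m) uhat \ topK g uhat, ∑ _i ∈ topK g uhat, P i2 := by
        rw [Finset.sum_mul]
        refine Finset.sum_congr rfl fun i2 _ => ?_
        rw [Finset.sum_const, hA, nsmul_eq_mul, mul_comm]
    _ ≤ ∑ i2 ∈ topK (g + m) uhat \ topK g uhat, ∑ i ∈ topK g uhat, P i := by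
        refine Finset.sum_le_sum fun i2 hi2 => Finset.sum_le_sum fun i hi => ?_
        exact hPm i hi i2 hi2
    _ = ∑ i ∈ topK g uhat, ∑ _i2 ∈ topK (g + m) uhat \ topK g uhat, P i :=
        Finset.sum_comm
    _ = (∑ i ∈ topK g uhat, P i) * (m : ℝ) := by
        rw [Finset.sum_mul]
        refine Finset.sum_congr rfl fun i _ => ?_
        rw [Finset.sum_const, hB, nsmul_eq_mul, mul_comm]
end
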